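/- arXiv:1905.02694 — 8 statements merged into one kernel-verified Lean document; each statement's English description precedes it below -/
import Mathlib

section
/- For a unit a in a commutative ring R, the symplectic matrix K_{ii}(a), which is diagonal with a in position i, a^{-1} in position n+i, and 1 elsewhere, factors as K_{ii}(a) = E_{ii}(a-1) F_{ii}(1) E_{ii}(a^{-1}-1) F_{ii}(-a). -/
open Matrix

/-- Index type for `2n × 2n` block matrices. -/
abbrev Idx (n : ℕ) := Fin n ⊕ Fin n

/-- The standard symplectic form matrix `J = [[0, I], [-I, 0]]`. -/
def Jmat (R : Type*) [CommRing R] (n : ℕ) : Matrix (Idx n) (Idx n) R :=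
  Matrix.fromBlocks 0 1 (-1) 0

/-- A `2n × 2n` matrix is symplectic if `Mᵀ J M = J`. -/
def IsSymplectic {R : Type*} [CommRing R] {n : ℕ} (M : Matrix (Idx n) (Idx n) R) : Prop :=
  Mᵀ * Jmat R n * M = Jmat R n

/-- The symmetric `n × n` matrix with `a` in entries `(i,j)` and `(j,i)` and zeros elsewhere. -/
def Smat {R : Type*} [CommRing R] {n : ℕ} (i j : Fin n) (a : R) : Matrix (Fin n) (Fin n) R :=
  Matrix.of fun k l => if (k = i ∧ l = j) ∨ (k = j ∧ l = i) then a else 0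

/-- The elementary symplectic matrix `E_{ij}(a) = [[I, S],[0, I]]`. -/
def Emat {R : Type*} [CommRing R] {n : ℕ} (i j : Fin n) (a : R) : Matrix (Idx n) (Idx n) R :=
  Matrix.fromBlocks 1 (Smat i j a) 0 1

/-- The elementary symplectic matrix `F_{ij}(a) = [[I, 0],[S, I]]`. -/
def Fmat {R : Type*} [CommRing R] {n : ℕ} (i j : Fin n) (a : R) : Matrix (Idx n) (Idx n) R :=
  Matrix.fromBlocks 1 0 (Smat i j a) 1

/-- The matrix `K_{ij}(a) = [[I + a e_{ij}, 0],[0, I - a e_{ji}]]` for `i ≠ j`. -/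
def Kmat {R : Type*} [CommRing R] {n : ℕ} (i j : Fin n) (a : R) :
    Matrix (Idx n) (Idx n) R :=
  Matrix.fromBlocks (1 + Matrix.single i j a) 0 0 (1 - Matrix.single j i a)

/-- An elementary symplectic matrix: `[[I,B],[0,I]]` or `[[I,0],[C,I]]` with symmetric block. -/
def IsElemSymp {R : Type*} [CommRing R] {n : ℕ} (M : Matrix (Idx n) (Idx n) R) : Prop :=
  ∃ B : Matrix (Fin n) (Fin n) R, Bᵀ = B ∧
    (M = Matrix.fromBlocks 1 B 0 1 ∨ M = Matrix.fromBlocks 1 0 B 1)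


private lemma Smat_ii_eq {R : Type*} [CommRing R] {n : ℕ} (i : Fin n) (b : R) :
    Smat i i b = Matrix.single i i b := by
  ext k l
  simp [Smat, Matrix.single, and_comm, eq_comm]

private lemma stmt3_aux {R : Type*} [CommRing R] {n : ℕ} (i : Fin n) (a : Rˣ) :
    Matrix.diagonal (Sum.elim (fun k => if k = i then (a : R) else 1)
        (fun k => if k = i then ((a⁻¹ : Rˣ) : R) else 1)) =
      (Matrix.fromBlocks 1 (Matrix.single i i ((a:R)-1)) 0 1) *
      (Matrix.fromBlocks 1 0 (Matrix.single i i (1:R)) 1) *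
      (Matrix.fromBlocks 1 (Matrix.single i i (((a⁻¹ : Rˣ) : R)-1)) 0 1) *
      (Matrix.fromBlocks 1 0 (Matrix.single i i (-(a:R))) 1) := by
  have huv : (a : R) * ((a⁻¹ : Rˣ) : R) = 1 := by exact_mod_cast a.mul_inv
  rw [← Matrix.fromBlocks_diagonal]
  simp only [Matrix.fromBlocks_multiply, Matrix.mul_one, Matrix.one_mul, Matrix.mul_zero,
    Matrix.zero_mul, add_zero, zero_add, Matrix.add_mul, Matrix.mul_add,
    Matrix.single_mul_single_same]
  ext (k|k) (l|l) <;>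
    simp [Matrix.single, Matrix.one_apply, Matrix.diagonal_apply] <;>
    split_ifs <;>
    first
      | ring1
      | (exfalso; omega)
      | (linear_combination huv)
      | (linear_combination (-1 : R) * huv)
      | (linear_combination (a : R) * huv)
      | (linear_combination (-(a : R)) * huv)
      | (linear_combination ((a⁻¹ : Rˣ) : R) * huv)
      | (linear_combination (-((a⁻¹ : Rˣ) : R)) * huv)

/-- For a unit `a`, the diagonal symplectic matrix `K_{ii}(a)` factors as
`E_{ii}(a-1) F_{ii}(1) E_{ii}(a⁻¹-1) F_{ii}(-a)`. -/
theorem stmt3 {R : Type*} [CommRing R] {n : ℕ} (i : Fin n) (a : Rˣ) :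
    Matrix.diagonal (Sum.elim (fun k => if k = i then (a : R) else 1)
        (fun k => if k = i then ((a⁻¹ : Rˣ) : R) else 1)) =
      Emat i i ((a : R) - 1) * Fmat i i 1 * Emat i i (((a⁻¹ : Rˣ) : R) - 1) *
        Fmat i i (-(a : R)) := by
  simp only [Emat, Fmat, Smat_ii_eq]
  exact stmt3_aux i a
end

section
/- For a ∈ R and indices i ≠ j, the symplectic matrix K_{ij}(a) = [[A, 0],[0, (A^T)^{-1}]], where A = I + a·e_{ij}, factors as a product of five elementary symplectic matrices: K_{ij}(a) = F_{jj}(-a) E_{ij}(1) F_{jj}(a) E_{ii}(a) E_{ij}(-1). -/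
open Matrix

lemma Smat_ne {R : Type*} [CommRing R] {n : ℕ} {i j : Fin n} (hij : i ≠ j) (a : R) :
    Smat i j a = Matrix.single i j a + Matrix.single j i a := by
  ext k l
  simp only [Smat, Matrix.of_apply, Matrix.add_apply, Matrix.single]
  aesop

lemma Smat_same {R : Type*} [CommRing R] {n : ℕ} (i : Fin n) (a : R) :
    Smat i i a = Matrix.single i i a := by
  ext k l
  simp only [Smat, Matrix.of_apply, Matrix.single]
  aesop

/-- For `i ≠ j`, `K_{ij}(a)` factors as `F_{jj}(-a) E_{ij}(1) F_{jj}(a) E_{ii}(a) E_{ij}(-1)`. -/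
theorem stmt4 {R : Type*} [CommRing R] {n : ℕ} (i j : Fin n) (hij : i ≠ j) (a : R) :
    Kmat i j a =
      Fmat j j (-a) * Emat i j 1 * Fmat j j a * Emat i i a * Emat i j (-1) := by
  have hji : j ≠ i := hij.symm
  simp only [Kmat, Fmat, Emat, Smat_ne hij, Smat_same, Matrix.fromBlocks_multiply]
  simp only [Matrix.mul_one, Matrix.one_mul, Matrix.mul_zero, Matrix.zero_mul, add_zero,
    zero_add, mul_add, add_mul, Matrix.single_mul_single_same,
    Matrix.single_mul_single_of_ne _ _ _ _ hij, Matrix.single_mul_single_of_ne _ _ _ _ hji,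
    mul_one, one_mul, mul_zero, zero_mul, mul_neg, neg_mul]
  rw [Matrix.fromBlocks_inj]
  refine ⟨rfl, ?_, ?_, ?_⟩ <;>
    · ext k l
      simp only [Matrix.single, Matrix.add_apply, Matrix.sub_apply, Matrix.zero_apply,
        Matrix.of_apply, Matrix.one_apply]
      split_ifs <;> ring
end

section
/- If R is a commutative ring of Bass stable rank 1, then every symplectic 2n×2n matrix over R is a product of elementary symplectic matrices. -/
open Matrix

namespace Stmt8Aux
open Matrix
variable {R : Type*} [CommRing R] {n : ℕ}

/-- product-of-elementaries predicate -/
def P {n : ℕ} (M : Matrix (Idx n) (Idx n) R) : Prop :=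
  ∃ L : List (Matrix (Idx n) (Idx n) R), (∀ E ∈ L, IsElemSymp E) ∧ M = L.prod

lemma P_one : P (1 : Matrix (Idx n) (Idx n) R) := ⟨[], by simp, by simp⟩

lemma P_mul {A B : Matrix (Idx n) (Idx n) R} (hA : P A) (hB : P B) : P (A * B) := by
  obtain ⟨L1, h1, e1⟩ := hA
  obtain ⟨L2, h2, e2⟩ := hB
  refine ⟨L1 ++ L2, ?_, by rw [List.prod_append, e1, e2]⟩
  intro E hE
  rcases List.mem_append.1 hE with h | h
  exacts [h1 E h, h2 E h]

lemma P_elem {A : Matrix (Idx n) (Idx n) R} (h : IsElemSymp A) : P A :=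
  ⟨[A], by simpa using h, by simp⟩

lemma elem_inv {A : Matrix (Idx n) (Idx n) R} (h : IsElemSymp A) :
    ∃ A', IsElemSymp A' ∧ A' * A = 1 := by
  obtain ⟨B, hB, hA | hA⟩ := h
  · refine ⟨fromBlocks 1 (-B) 0 1, ⟨-B, by rw [transpose_neg, hB], Or.inl rfl⟩, ?_⟩
    rw [hA, fromBlocks_multiply]
    simpa using fromBlocks_one
  · refine ⟨fromBlocks 1 0 (-B) 1, ⟨-B, by rw [transpose_neg, hB], Or.inr rfl⟩, ?_⟩
    rw [hA, fromBlocks_multiply]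
    simpa using fromBlocks_one

lemma P_cancel {G M : Matrix (Idx n) (Idx n) R} (hG : IsElemSymp G) (h : P (G * M)) : P M := by
  obtain ⟨G', hG', hinv⟩ := elem_inv hG
  have hM : M = G' * (G * M) := by rw [← Matrix.mul_assoc, hinv, Matrix.one_mul]
  rw [hM]; exact P_mul (P_elem hG') h

lemma isSymplectic_mul {A B : Matrix (Idx n) (Idx n) R} (hA : IsSymplectic A)
    (hB : IsSymplectic B) : IsSymplectic (A * B) := by
  unfold IsSymplectic at *
  rw [transpose_mul]
  have h : Bᵀ * Aᵀ * Jmat R n * (A * B) = Bᵀ * (Aᵀ * Jmat R n * A) * B := by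
    noncomm_ring
  rw [h, hA, hB]

lemma isSymplectic_E {B : Matrix (Fin n) (Fin n) R} (hB : Bᵀ = B) :
    IsSymplectic (fromBlocks 1 B 0 1 : Matrix (Idx n) (Idx n) R) := by
  unfold IsSymplectic Jmat
  rw [fromBlocks_transpose, fromBlocks_multiply, fromBlocks_multiply]
  simp [hB]

lemma isSymplectic_F {B : Matrix (Fin n) (Fin n) R} (hB : Bᵀ = B) :
    IsSymplectic (fromBlocks 1 0 B 1 : Matrix (Idx n) (Idx n) R) := by
  unfold IsSymplectic Jmat
  rw [fromBlocks_transpose, fromBlocks_multiply, fromBlocks_multiply]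
  simp [hB]

lemma J_mul_J : Jmat R n * Jmat R n = -1 := by
  unfold Jmat
  rw [fromBlocks_multiply]
  simp [← fromBlocks_one, fromBlocks_neg]

lemma symp_left_inv {M : Matrix (Idx n) (Idx n) R} (hM : IsSymplectic M) :
    (-(Jmat R n) * Mᵀ * Jmat R n) * M = 1 := by
  have h : (-(Jmat R n) * Mᵀ * Jmat R n) * M = -(Jmat R n * (Mᵀ * Jmat R n * M)) := by
    noncomm_ring
  rw [h, hM, J_mul_J, neg_neg]

end Stmt8Aux
namespace Stmt8Aux
section Gadgets
open Matrix
variable {R : Type*} [CommRing R] {n : ℕ}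

lemma vecMulVec_mulVec' (u w x : Fin n → R) :
    vecMulVec u w *ᵥ x = (w ⬝ᵥ x) • u := by
  funext i
  simp [Matrix.mulVec, dotProduct, vecMulVec_apply, Finset.mul_sum, mul_assoc,
    mul_comm, mul_left_comm]

lemma diagonal_mulVec' (v x : Fin n → R) :
    Matrix.diagonal v *ᵥ x = fun i => v i * x i := by
  funext i; rw [mulVec_diagonal]

lemma col_mul (G X : Matrix (Idx n) (Idx n) R) (c : Idx n) :
    (fun k => (G * X) k c) = G *ᵥ (fun k => X k c) := by
  funext k
  simp [Matrix.mul_apply, Matrix.mulVec, dotProduct]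

lemma col_elim (X : Matrix (Idx n) (Idx n) R) (c : Idx n) :
    (fun k => X k c) = Sum.elim (fun i => X (Sum.inl i) c) (fun i => X (Sum.inr i) c) := by
  funext k; cases k <;> rfl

lemma E_mulVec (B : Matrix (Fin n) (Fin n) R) (x y : Fin n → R) :
    (fromBlocks 1 B 0 1 : Matrix (Idx n) (Idx n) R) *ᵥ Sum.elim x y
      = Sum.elim (x + B *ᵥ y) y := by
  rw [fromBlocks_mulVec]
  simp

lemma F_mulVec (B : Matrix (Fin n) (Fin n) R) (x y : Fin n → R) :
    (fromBlocks 1 0 B 1 : Matrix (Idx n) (Idx n) R) *ᵥ Sum.elim x y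
      = Sum.elim x (B *ᵥ x + y) := by
  rw [fromBlocks_mulVec]
  simp [add_comm]

end Gadgets

section LemU
variable {R : Type*} [CommRing R]

lemma lemU (hbsr : ∀ x₁ x₂ : R, (∃ r s : R, r * x₁ + s * x₂ = 1) → ∃ y : R, IsUnit (x₁ + y * x₂)) :
    ∀ (k : ℕ) (t b : Fin k → R) (c : R),
    (∃ r s : Fin k → R, ∃ z : R, (∑ i, (r i * t i + s i * b i)) + z * c = 1) →
    ∃ (lam r' : Fin k → R) (z' : R), (∑ i, r' i * (t i + lam i * b i)) + z' * c = 1 := by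
  intro k
  induction k with
  | zero =>
    intro t b c h
    obtain ⟨r, s, z, h⟩ := h
    exact ⟨0, 0, z, by simpa using h⟩
  | succ k ih =>
    intro t b c h
    obtain ⟨r, s, z, h⟩ := h
    rw [Fin.sum_univ_succ] at h
    set T := ∑ i : Fin k, (r i.succ * t i.succ + s i.succ * b i.succ) with hT
    obtain ⟨y, u, hu⟩ := hbsr (t 0) (s 0 * b 0 + T + z * c) ⟨r 0, 1, by linear_combination h⟩
    -- hu : ↑u = t 0 + y * (s 0 * b 0 + T + z * c)
    have huinv : (↑u⁻¹ : R) * ↑u = 1 := u.inv_mul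
    have hkey : (↑u⁻¹ : R) * (t 0 + y * (s 0 * b 0 + T + z * c)) = 1 := by
      rw [← hu]; exact huinv
    set ctil : R := ↑u⁻¹ * (t 0 + (y * s 0) * b 0) + (↑u⁻¹ * y * z) * c with hctil
    have hIH : ∃ r' s' : Fin k → R, ∃ z' : R,
        (∑ i, (r' i * (t ∘ Fin.succ) i + s' i * (b ∘ Fin.succ) i)) + z' * ctil = 1 := by
      refine ⟨fun i => ↑u⁻¹ * y * r i.succ, fun i => ↑u⁻¹ * y * s i.succ, 1, ?_⟩
      have hsum : (∑ i : Fin k, ((↑u⁻¹ * y * r i.succ) * (t ∘ Fin.succ) i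
          + (↑u⁻¹ * y * s i.succ) * (b ∘ Fin.succ) i)) = ↑u⁻¹ * y * T := by
        rw [hT, Finset.mul_sum]
        refine Finset.sum_congr rfl fun i _ => ?_
        simp only [Function.comp_apply]
        ring
      rw [hsum, hctil]
      linear_combination hkey
    obtain ⟨lam', r'', z'', hres⟩ := ih (t ∘ Fin.succ) (b ∘ Fin.succ) ctil hIH
    refine ⟨Fin.cons (y * s 0) lam', Fin.cons (z'' * ↑u⁻¹) r'', z'' * ↑u⁻¹ * y * z, ?_⟩
    rw [Fin.sum_univ_succ]
    simp only [Fin.cons_zero, Fin.cons_succ]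
    simp only [Function.comp_apply] at hres
    rw [hctil] at hres
    linear_combination hres

end LemU
end Stmt8Aux
namespace Stmt8Aux
section Lift
open Matrix
variable {R : Type*} [CommRing R] {n : ℕ}

/-- Embed an `n × n` matrix into an `(n+1) × (n+1)` matrix, with corner entry `d`
and zeros in the rest of row 0 and column 0. -/
def liftF (d : R) (B : Matrix (Fin n) (Fin n) R) : Matrix (Fin (n+1)) (Fin (n+1)) R :=
  Matrix.of (Fin.cons (Fin.cons d (fun _ => 0)) (fun i => Fin.cons 0 (fun j => B i j)))

@[simp] lemma liftF_zz (d : R) (B : Matrix (Fin n) (Fin n) R) : liftF d B 0 0 = d := by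
  simp [liftF]

@[simp] lemma liftF_zs (d : R) (B : Matrix (Fin n) (Fin n) R) (j : Fin n) :
    liftF d B 0 j.succ = 0 := by simp [liftF]

@[simp] lemma liftF_sz (d : R) (B : Matrix (Fin n) (Fin n) R) (i : Fin n) :
    liftF d B i.succ 0 = 0 := by simp [liftF]

@[simp] lemma liftF_ss (d : R) (B : Matrix (Fin n) (Fin n) R) (i j : Fin n) :
    liftF d B i.succ j.succ = B i j := by simp [liftF]

lemma liftF_mul (d e : R) (B C : Matrix (Fin n) (Fin n) R) :
    liftF d B * liftF e C = liftF (d * e) (B * C) := by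
  ext i j
  rw [Matrix.mul_apply, Fin.sum_univ_succ]
  refine Fin.cases ?_ (fun i => ?_) i <;> refine Fin.cases ?_ (fun j => ?_) j <;>
    simp [Matrix.mul_apply]

lemma liftF_add (d e : R) (B C : Matrix (Fin n) (Fin n) R) :
    liftF d B + liftF e C = liftF (d + e) (B + C) := by
  ext i j
  refine Fin.cases ?_ (fun i => ?_) i <;> refine Fin.cases ?_ (fun j => ?_) j <;> simp

lemma liftF_transpose (d : R) (B : Matrix (Fin n) (Fin n) R) :
    (liftF d B)ᵀ = liftF d Bᵀ := by
  ext i j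
  refine Fin.cases ?_ (fun i => ?_) i <;> refine Fin.cases ?_ (fun j => ?_) j <;> simp

lemma liftF_one : liftF (1 : R) (1 : Matrix (Fin n) (Fin n) R) = 1 := by
  ext i j
  refine Fin.cases ?_ (fun i => ?_) i <;> refine Fin.cases ?_ (fun j => ?_) j <;>
    simp [Matrix.one_apply, Fin.succ_ne_zero, (Fin.succ_ne_zero _).symm, Fin.succ_inj]

lemma liftF_zero : liftF (0 : R) (0 : Matrix (Fin n) (Fin n) R) = 0 := by
  ext i j
  refine Fin.cases ?_ (fun i => ?_) i <;> refine Fin.cases ?_ (fun j => ?_) j <;> simp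

lemma liftF_neg_one : liftF (-1 : R) (-1 : Matrix (Fin n) (Fin n) R) = -1 := by
  have : liftF (-1 : R) (-1 : Matrix (Fin n) (Fin n) R) = -liftF 1 1 := by
    ext i j
    refine Fin.cases ?_ (fun i => ?_) i <;> refine Fin.cases ?_ (fun j => ?_) j <;> simp
  rw [this, liftF_one]

lemma liftF_congr {d e : R} {B C : Matrix (Fin n) (Fin n) R} (h1 : d = e) (h2 : B = C) :
    liftF d B = liftF e C := by rw [h1, h2]

lemma liftF_inj {d e : R} {B C : Matrix (Fin n) (Fin n) R} (h : liftF d B = liftF e C) :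
    B = C := by
  ext i j
  have := congrFun (congrFun h i.succ) j.succ
  simpa using this

/-- Embed a `2n × 2n` block matrix into a `2(n+1) × 2(n+1)` matrix, extending by the
identity on the two new coordinates. -/
def liftB (a b c d : Matrix (Fin n) (Fin n) R) : Matrix (Idx (n+1)) (Idx (n+1)) R :=
  fromBlocks (liftF 1 a) (liftF 0 b) (liftF 0 c) (liftF 1 d)

lemma liftB_mul (a b c d a' b' c' d' : Matrix (Fin n) (Fin n) R) :
    liftB a b c d * liftB a' b' c' d'
      = liftB (a * a' + b * c') (a * b' + b * d') (c * a' + d * c') (c * b' + d * d') := by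
  unfold liftB
  rw [fromBlocks_multiply]
  rw [liftF_mul, liftF_mul, liftF_mul, liftF_mul, liftF_mul, liftF_mul, liftF_mul, liftF_mul,
    liftF_add, liftF_add, liftF_add, liftF_add]
  norm_num

lemma liftB_one : liftB (1 : Matrix (Fin n) (Fin n) R) 0 0 1 = 1 := by
  unfold liftB
  rw [liftF_one, liftF_zero, fromBlocks_one]

lemma Jmat_succ : Jmat R (n+1)
    = fromBlocks (liftF 0 0) (liftF 1 1) (liftF (-1) (-1)) (liftF 0 0) := by
  unfold Jmat
  rw [liftF_zero, liftF_one, liftF_neg_one]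

lemma symp_blocks (a b c d : Matrix (Fin n) (Fin n) R) :
    (fromBlocks a b c d)ᵀ * Jmat R n * fromBlocks a b c d
      = fromBlocks (aᵀ*c - cᵀ*a) (aᵀ*d - cᵀ*b) (bᵀ*c - dᵀ*a) (bᵀ*d - dᵀ*b) := by
  unfold Jmat
  rw [fromBlocks_transpose, fromBlocks_multiply, fromBlocks_multiply]
  refine fromBlocks_inj.mpr ⟨?_, ?_, ?_, ?_⟩ <;> noncomm_ring

lemma liftB_symp_blocks (a b c d : Matrix (Fin n) (Fin n) R) :
    (liftB a b c d)ᵀ * Jmat R (n+1) * liftB a b c d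
      = fromBlocks (liftF 0 (aᵀ*c - cᵀ*a)) (liftF 1 (aᵀ*d - cᵀ*b))
          (liftF (-1) (bᵀ*c - dᵀ*a)) (liftF 0 (bᵀ*d - dᵀ*b)) := by
  unfold liftB
  rw [Jmat_succ, fromBlocks_transpose, liftF_transpose, liftF_transpose, liftF_transpose,
    liftF_transpose, fromBlocks_multiply, fromBlocks_multiply]
  refine fromBlocks_inj.mpr ⟨?_, ?_, ?_, ?_⟩
  all_goals simp only [Matrix.add_mul, Matrix.mul_add, liftF_mul, liftF_add]
  all_goals refine liftF_congr (by ring) ?_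
  all_goals noncomm_ring

lemma symp_compress {a b c d : Matrix (Fin n) (Fin n) R}
    (h : IsSymplectic (liftB a b c d)) : IsSymplectic (fromBlocks a b c d) := by
  unfold IsSymplectic at h ⊢
  rw [liftB_symp_blocks, Jmat_succ] at h
  obtain ⟨h1, h2, h3, h4⟩ := fromBlocks_inj.mp h
  rw [symp_blocks, liftF_inj h1, liftF_inj h2, liftF_inj h3, liftF_inj h4]
  rfl

end Lift
end Stmt8Aux
namespace Stmt8Aux
section Lift2
open Matrix
variable {R : Type*} [CommRing R] {n : ℕ}

/-- Lift a `2n × 2n` matrix to a `2(n+1) × 2(n+1)` matrix. -/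
def lift (A : Matrix (Idx n) (Idx n) R) : Matrix (Idx (n+1)) (Idx (n+1)) R :=
  liftB A.toBlocks₁₁ A.toBlocks₁₂ A.toBlocks₂₁ A.toBlocks₂₂

lemma lift_fromBlocks (a b c d : Matrix (Fin n) (Fin n) R) :
    lift (fromBlocks a b c d) = liftB a b c d := by
  unfold lift
  rw [toBlocks_fromBlocks₁₁, toBlocks_fromBlocks₁₂, toBlocks_fromBlocks₂₁, toBlocks_fromBlocks₂₂]

lemma lift_mul (A B : Matrix (Idx n) (Idx n) R) : lift (A * B) = lift A * lift B := by
  rw [← fromBlocks_toBlocks A, ← fromBlocks_toBlocks B, fromBlocks_multiply,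
    lift_fromBlocks, lift_fromBlocks, lift_fromBlocks, liftB_mul]

lemma lift_one : lift (1 : Matrix (Idx n) (Idx n) R) = 1 := by
  rw [show (1 : Matrix (Idx n) (Idx n) R) = fromBlocks 1 0 0 1 from fromBlocks_one.symm,
    lift_fromBlocks, liftB_one]

lemma lift_prod (L : List (Matrix (Idx n) (Idx n) R)) :
    lift L.prod = (L.map lift).prod := by
  induction L with
  | nil => simpa using lift_one
  | cons A L ih => rw [List.prod_cons, lift_mul, ih, List.map_cons, List.prod_cons]

lemma lift_elem {E : Matrix (Idx n) (Idx n) R} (h : IsElemSymp E) : IsElemSymp (lift E) := by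
  obtain ⟨B, hB, hE | hE⟩ := h
  · refine ⟨liftF 0 B, by rw [liftF_transpose, hB], Or.inl ?_⟩
    rw [hE, lift_fromBlocks]
    unfold liftB
    rw [liftF_one, liftF_zero]
  · refine ⟨liftF 0 B, by rw [liftF_transpose, hB], Or.inr ?_⟩
    rw [hE, lift_fromBlocks]
    unfold liftB
    rw [liftF_one, liftF_zero]

lemma eq_liftB {N : Matrix (Idx (n+1)) (Idx (n+1)) R}
    (hc1 : ∀ k, N k (Sum.inl 0) = Sum.elim (Pi.single 0 1) (0 : Fin (n+1) → R) k)
    (hc2 : ∀ k, N k (Sum.inr 0) = Sum.elim (0 : Fin (n+1) → R) (Pi.single 0 1) k)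
    (hr1 : ∀ k, N (Sum.inl 0) k = Sum.elim (Pi.single 0 1) (0 : Fin (n+1) → R) k)
    (hr2 : ∀ k, N (Sum.inr 0) k = Sum.elim (0 : Fin (n+1) → R) (Pi.single 0 1) k) :
    N = liftB (Matrix.of fun i j => N (Sum.inl i.succ) (Sum.inl j.succ))
          (Matrix.of fun i j => N (Sum.inl i.succ) (Sum.inr j.succ))
          (Matrix.of fun i j => N (Sum.inr i.succ) (Sum.inl j.succ))
          (Matrix.of fun i j => N (Sum.inr i.succ) (Sum.inr j.succ)) := by
  unfold liftB
  ext x y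
  cases x with
  | inl i =>
    cases y with
    | inl j =>
      rw [fromBlocks_apply₁₁]
      refine Fin.cases ?_ (fun i => ?_) i <;> refine Fin.cases ?_ (fun j => ?_) j
      · rw [liftF_zz]; simpa using hr1 (Sum.inl 0)
      · rw [liftF_zs]; simpa [Fin.succ_ne_zero] using hr1 (Sum.inl j.succ)
      · rw [liftF_sz]; simpa [Fin.succ_ne_zero] using hc1 (Sum.inl i.succ)
      · rw [liftF_ss]; rfl
    | inr j =>
      rw [fromBlocks_apply₁₂]
      refine Fin.cases ?_ (fun i => ?_) i <;> refine Fin.cases ?_ (fun j => ?_) j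
      · rw [liftF_zz]; simpa using hr1 (Sum.inr 0)
      · rw [liftF_zs]; simpa [Fin.succ_ne_zero] using hr1 (Sum.inr j.succ)
      · rw [liftF_sz]; simpa using hc2 (Sum.inl i.succ)
      · rw [liftF_ss]; rfl
  | inr i =>
    cases y with
    | inl j =>
      rw [fromBlocks_apply₂₁]
      refine Fin.cases ?_ (fun i => ?_) i <;> refine Fin.cases ?_ (fun j => ?_) j
      · rw [liftF_zz]; simpa using hr2 (Sum.inl 0)
      · rw [liftF_zs]; simpa using hr2 (Sum.inl j.succ)
      · rw [liftF_sz]; simpa using hc1 (Sum.inr i.succ)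
      · rw [liftF_ss]; rfl
    | inr j =>
      rw [fromBlocks_apply₂₂]
      refine Fin.cases ?_ (fun i => ?_) i <;> refine Fin.cases ?_ (fun j => ?_) j
      · rw [liftF_zz]; simpa using hr2 (Sum.inr 0)
      · rw [liftF_zs]; simpa [Fin.succ_ne_zero] using hr2 (Sum.inr j.succ)
      · rw [liftF_sz]; simpa [Fin.succ_ne_zero] using hc2 (Sum.inr i.succ)
      · rw [liftF_ss]; rfl

lemma rows_std {N : Matrix (Idx (n+1)) (Idx (n+1)) R} (hN : IsSymplectic N)
    (hc1 : ∀ k, N k (Sum.inl 0) = Sum.elim (Pi.single 0 1) (0 : Fin (n+1) → R) k)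
    (hc2 : ∀ k, N k (Sum.inr 0) = Sum.elim (0 : Fin (n+1) → R) (Pi.single 0 1) k) :
    (∀ k, N (Sum.inl 0) k = Sum.elim (Pi.single 0 1) (0 : Fin (n+1) → R) k)
    ∧ (∀ k, N (Sum.inr 0) k = Sum.elim (0 : Fin (n+1) → R) (Pi.single 0 1) k) := by
  have hN' : Nᵀ * (Jmat R (n+1) * N) = Jmat R (n+1) := by
    rw [← Matrix.mul_assoc]; exact hN
  have key1 : ∀ k, N (Sum.inr 0) k = Jmat R (n+1) (Sum.inl 0) k := by
    intro k
    have h := congrFun (congrFun hN' (Sum.inl 0)) k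
    rw [Matrix.mul_apply, Fintype.sum_sum_type] at h
    simp only [transpose_apply, hc1, Sum.elim_inl, Sum.elim_inr, Pi.zero_apply, zero_mul,
      Finset.sum_const_zero, add_zero, Pi.single_apply, ite_mul, one_mul, zero_mul,
      Finset.sum_ite_eq', Finset.mem_univ, if_true] at h
    rw [← h, Matrix.mul_apply, Fintype.sum_sum_type]
    simp [Jmat, fromBlocks_apply₁₁, fromBlocks_apply₁₂, Matrix.one_apply, ite_mul,
      Finset.sum_ite_eq, eq_comm]
  have key2 : ∀ k, N (Sum.inl 0) k = -Jmat R (n+1) (Sum.inr 0) k := by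
    intro k
    have h := congrFun (congrFun hN' (Sum.inr 0)) k
    rw [Matrix.mul_apply, Fintype.sum_sum_type] at h
    simp only [transpose_apply, hc2, Sum.elim_inl, Sum.elim_inr, Pi.zero_apply, zero_mul,
      Finset.sum_const_zero, zero_add, Pi.single_apply, ite_mul, one_mul,
      Finset.sum_ite_eq', Finset.mem_univ, if_true] at h
    have h2 : (Jmat R (n+1) * N) (Sum.inr 0) k = -(N (Sum.inl 0) k) := by
      rw [Matrix.mul_apply, Fintype.sum_sum_type]
      simp [Jmat, fromBlocks_apply₂₁, fromBlocks_apply₂₂, Matrix.one_apply, ite_mul,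
        Finset.sum_ite_eq, eq_comm]
    rw [h2] at h
    rw [← h, neg_neg]
  constructor
  · intro k
    rw [key2 k]
    cases k with
    | inl j => simp [Jmat, fromBlocks_apply₂₁, Matrix.one_apply, Pi.single_apply, eq_comm]
    | inr j => simp [Jmat, fromBlocks_apply₂₂]
  · intro k
    rw [key1 k]
    cases k with
    | inl j => simp [Jmat, fromBlocks_apply₁₁]
    | inr j => simp [Jmat, fromBlocks_apply₁₂, Matrix.one_apply, Pi.single_apply, eq_comm]

lemma unim {M : Matrix (Idx (n+1)) (Idx (n+1)) R} (hM : IsSymplectic M) :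
    ∃ r s : Fin (n+1) → R,
      (∑ i, (r i * M (Sum.inl i) (Sum.inl 0) + s i * M (Sum.inr i) (Sum.inl 0))) = 1 := by
  have h := symp_left_inv hM
  have h0 := congrFun (congrFun h (Sum.inl 0)) (Sum.inl 0)
  rw [Matrix.mul_apply, Fintype.sum_sum_type] at h0
  refine ⟨fun i => (-(Jmat R (n+1)) * Mᵀ * Jmat R (n+1)) (Sum.inl 0) (Sum.inl i),
    fun i => (-(Jmat R (n+1)) * Mᵀ * Jmat R (n+1)) (Sum.inl 0) (Sum.inr i), ?_⟩
  rw [Finset.sum_add_distrib]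
  rw [h0]
  simp [Matrix.one_apply]
end Lift2
end Stmt8Aux
namespace Stmt8Aux
section Main
open Matrix
variable {R : Type*} [CommRing R] {m : ℕ}

/-- The first standard basis vector. -/
def ee (m : ℕ) (R : Type*) [CommRing R] : Fin (m+1) → R := Pi.single 0 1

@[simp] lemma ee_zero : ee m R 0 = 1 := Pi.single_eq_same 0 1

@[simp] lemma ee_dot (x : Fin (m+1) → R) : ee m R ⬝ᵥ x = x 0 := by
  rw [ee, single_dotProduct, one_mul]

@[simp] lemma dot_ee (x : Fin (m+1) → R) : x ⬝ᵥ ee m R = x 0 := by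
  rw [ee, dotProduct_single, mul_one]

lemma vecMulVec_transpose (u w : Fin n → R) : (vecMulVec u w)ᵀ = vecMulVec w u := by
  ext i j; simp [vecMulVec_apply, mul_comm]

lemma colE {B : Matrix (Fin n) (Fin n) R} {X : Matrix (Idx n) (Idx n) R} {c : Idx n}
    {x y : Fin n → R} (h : (fun k => X k c) = Sum.elim x y) :
    (fun k => (((fromBlocks 1 B 0 1) : Matrix (Idx n) (Idx n) R) * X) k c) = Sum.elim (x + B *ᵥ y) y := by
  rw [col_mul, h, E_mulVec]

lemma colF {B : Matrix (Fin n) (Fin n) R} {X : Matrix (Idx n) (Idx n) R} {c : Idx n}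
    {x y : Fin n → R} (h : (fun k => X k c) = Sum.elim x y) :
    (fun k => (((fromBlocks 1 0 B 1) : Matrix (Idx n) (Idx n) R) * X) k c) = Sum.elim x (B *ᵥ x + y) := by
  rw [col_mul, h, F_mulVec]

lemma stage1
    (hbsr : ∀ x₁ x₂ : R, (∃ r s : R, r * x₁ + s * x₂ = 1) → ∃ y : R, IsUnit (x₁ + y * x₂))
    (M : Matrix (Idx (m+1)) (Idx (m+1)) R) (hM : IsSymplectic M) :
    ∃ N : Matrix (Idx (m+1)) (Idx (m+1)) R, IsSymplectic N ∧
      ((fun k => N k (Sum.inl 0)) = Sum.elim (ee m R) 0) ∧ (P N → P M) := by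
  obtain ⟨r, s, hrs⟩ := unim hM
  have h0 := col_elim M (Sum.inl 0)
  set t : Fin (m+1) → R := fun i => M (Sum.inl i) (Sum.inl 0) with ht
  set b : Fin (m+1) → R := fun i => M (Sum.inr i) (Sum.inl 0) with hb
  obtain ⟨lam, r', z', hU⟩ := lemU hbsr (m+1) t b 0 ⟨r, s, 0, by simpa using hrs⟩
  rw [mul_zero, add_zero] at hU
  -- step 1 : make the top of the first column unimodular
  set B1 : Matrix (Fin (m+1)) (Fin (m+1)) R := Matrix.diagonal lam with hB1
  have hB1s : B1ᵀ = B1 := diagonal_transpose lam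
  set M1 := (fromBlocks 1 B1 0 1) * M with hM1
  set t1 : Fin (m+1) → R := fun i => t i + lam i * b i with ht1def
  have h1 : (fun k => M1 k (Sum.inl 0)) = Sum.elim t1 b := by
    rw [hM1, colE h0]
    funext k
    cases k with
    | inl i => simp [hB1, mulVec_diagonal, ht1def]
    | inr i => rfl
  have ht1 : ∑ i, r' i * t1 i = 1 := by simpa [ht1def] using hU
  -- step 2 : make the (inr 0) entry equal to 1
  set c2 : Fin (m+1) → R := fun i => (1 - b 0) * r' i with hc2def
  set C2 : Matrix (Fin (m+1)) (Fin (m+1)) R :=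
    vecMulVec (ee m R) c2 + vecMulVec c2 (ee m R) - c2 0 • vecMulVec (ee m R) (ee m R)
    with hC2
  have hC2s : C2ᵀ = C2 := by
    rw [hC2]
    simp only [transpose_sub, transpose_add, transpose_smul, vecMulVec_transpose]
    abel
  set M2 := (fromBlocks 1 0 C2 1) * M1 with hM2
  set b2 : Fin (m+1) → R := C2 *ᵥ t1 + b with hb2def
  have h2 : (fun k => M2 k (Sum.inl 0)) = Sum.elim t1 b2 := by
    rw [hM2, colF h1]
  have hc2dot : c2 ⬝ᵥ t1 = 1 - b 0 := by
    have heq : ∀ i, c2 i * t1 i = (1 - b 0) * (r' i * t1 i) := fun i => by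
      rw [hc2def]; ring
    rw [dotProduct]
    simp_rw [heq]
    rw [← Finset.mul_sum, ht1, mul_one]
  have hC2t : C2 *ᵥ t1 = (c2 ⬝ᵥ t1) • ee m R + (t1 0) • c2 - ((c2 0) * (t1 0)) • ee m R := by
    rw [hC2, sub_mulVec, add_mulVec, vecMulVec_mulVec', vecMulVec_mulVec',
      smul_mulVec, vecMulVec_mulVec', ee_dot, smul_smul]
  have hb2 : b2 0 = 1 := by
    rw [hb2def]
    simp only [Pi.add_apply, Pi.sub_apply, Pi.smul_apply, smul_eq_mul, hC2t, ee_zero]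
    linear_combination hc2dot
  -- step 3 : make the (inl 0) entry equal to 1
  set B3 : Matrix (Fin (m+1)) (Fin (m+1)) R := (1 - t1 0) • vecMulVec (ee m R) (ee m R)
    with hB3
  have hB3s : B3ᵀ = B3 := by
    rw [hB3, transpose_smul, vecMulVec_transpose]
  set M3 := (fromBlocks 1 B3 0 1) * M2 with hM3
  set t3 : Fin (m+1) → R := t1 + B3 *ᵥ b2 with ht3def
  have h3 : (fun k => M3 k (Sum.inl 0)) = Sum.elim t3 b2 := by
    rw [hM3, colE h2]
  have hB3v : B3 *ᵥ b2 = ((1 - t1 0) * b2 0) • ee m R := by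
    rw [hB3, smul_mulVec, vecMulVec_mulVec', ee_dot, smul_smul]
  have ht3 : t3 0 = 1 := by
    rw [ht3def]
    simp only [Pi.add_apply, hB3v, Pi.smul_apply, smul_eq_mul, ee_zero, hb2]
    ring
  -- step 4 : clear the bottom of the first column
  set C4 : Matrix (Fin (m+1)) (Fin (m+1)) R :=
    (b2 ⬝ᵥ t3) • vecMulVec (ee m R) (ee m R) - (vecMulVec b2 (ee m R) + vecMulVec (ee m R) b2)
    with hC4
  have hC4s : C4ᵀ = C4 := by
    rw [hC4]
    simp only [transpose_sub, transpose_add, transpose_smul, vecMulVec_transpose]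
    abel
  set M4 := (fromBlocks 1 0 C4 1) * M3 with hM4
  have hC4v : C4 *ᵥ t3 + b2 = 0 := by
    rw [hC4, sub_mulVec, add_mulVec, smul_mulVec, vecMulVec_mulVec',
      vecMulVec_mulVec', vecMulVec_mulVec', ee_dot, ht3, one_smul, one_smul]
    module
  have h4 : (fun k => M4 k (Sum.inl 0)) = Sum.elim t3 0 := by
    rw [hM4, colF h3, hC4v]
  -- step 5 : put 1 in the (inr 0) entry
  set C5 : Matrix (Fin (m+1)) (Fin (m+1)) R := vecMulVec (ee m R) (ee m R) with hC5
  have hC5s : C5ᵀ = C5 := by rw [hC5, vecMulVec_transpose]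
  set M5 := (fromBlocks 1 0 C5 1) * M4 with hM5
  have h5 : (fun k => M5 k (Sum.inl 0)) = Sum.elim t3 (ee m R) := by
    rw [hM5, colF h4, hC5, vecMulVec_mulVec', ee_dot, ht3, one_smul, add_zero]
  -- step 6 : clear the rest of the top
  set B6 : Matrix (Fin (m+1)) (Fin (m+1)) R :=
    -(vecMulVec (t3 - ee m R) (ee m R) + vecMulVec (ee m R) (t3 - ee m R)) with hB6
  have hB6s : B6ᵀ = B6 := by
    rw [hB6]
    simp only [transpose_neg, transpose_add, vecMulVec_transpose]
    abel
  set M6 := (fromBlocks 1 B6 0 1) * M5 with hM6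
  have hB6v : t3 + B6 *ᵥ ee m R = ee m R := by
    rw [hB6, neg_mulVec, add_mulVec, vecMulVec_mulVec', vecMulVec_mulVec', ee_dot, dot_ee]
    have hz : (t3 - ee m R) 0 = 0 := by
      simp [Pi.sub_apply, ht3]
    rw [hz, ee_zero, zero_smul, one_smul, add_zero]
    module
  have h6 : (fun k => M6 k (Sum.inl 0)) = Sum.elim (ee m R) (ee m R) := by
    rw [hM6, colE h5, hB6v]
  -- step 7 : clear the (inr 0) entry
  set C7 : Matrix (Fin (m+1)) (Fin (m+1)) R := -vecMulVec (ee m R) (ee m R) with hC7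
  have hC7s : C7ᵀ = C7 := by rw [hC7, transpose_neg, vecMulVec_transpose]
  set M7 := (fromBlocks 1 0 C7 1) * M6 with hM7
  have h7 : (fun k => M7 k (Sum.inl 0)) = Sum.elim (ee m R) 0 := by
    rw [hM7, colF h6, hC7, neg_mulVec, vecMulVec_mulVec', ee_dot, ee_zero, one_smul,
      neg_add_cancel]
  refine ⟨M7, ?_, h7, ?_⟩
  · rw [hM7, hM6, hM5, hM4, hM3, hM2, hM1]
    exact isSymplectic_mul (isSymplectic_F hC7s) (isSymplectic_mul (isSymplectic_E hB6s)
      (isSymplectic_mul (isSymplectic_F hC5s) (isSymplectic_mul (isSymplectic_F hC4s)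
      (isSymplectic_mul (isSymplectic_E hB3s) (isSymplectic_mul (isSymplectic_F hC2s)
      (isSymplectic_mul (isSymplectic_E hB1s) hM))))))
  · intro h
    rw [hM7] at h
    replace h := P_cancel ⟨C7, hC7s, Or.inr rfl⟩ h
    rw [hM6] at h
    replace h := P_cancel ⟨B6, hB6s, Or.inl rfl⟩ h
    rw [hM5] at h
    replace h := P_cancel ⟨C5, hC5s, Or.inr rfl⟩ h
    rw [hM4] at h
    replace h := P_cancel ⟨C4, hC4s, Or.inr rfl⟩ h
    rw [hM3] at h
    replace h := P_cancel ⟨B3, hB3s, Or.inl rfl⟩ h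
    rw [hM2] at h
    replace h := P_cancel ⟨C2, hC2s, Or.inr rfl⟩ h
    rw [hM1] at h
    exact P_cancel ⟨B1, hB1s, Or.inl rfl⟩ h

end Main
end Stmt8Aux
namespace Stmt8Aux
section Main2
open Matrix
variable {R : Type*} [CommRing R] {m : ℕ}

lemma wb0_eq {N : Matrix (Idx (m+1)) (Idx (m+1)) R} (hN : IsSymplectic N)
    (hc1 : ∀ k, N k (Sum.inl 0) = Sum.elim (Pi.single 0 1) (0 : Fin (m+1) → R) k) :
    N (Sum.inr 0) (Sum.inr 0) = 1 := by
  have hN' : Nᵀ * (Jmat R (m+1) * N) = Jmat R (m+1) := by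
    rw [← Matrix.mul_assoc]; exact hN
  have h := congrFun (congrFun hN' (Sum.inl 0)) (Sum.inr 0)
  rw [Matrix.mul_apply, Fintype.sum_sum_type] at h
  simp only [transpose_apply, hc1, Sum.elim_inl, Sum.elim_inr, Pi.zero_apply, zero_mul,
    Finset.sum_const_zero, add_zero, Pi.single_apply, ite_mul, one_mul, zero_mul,
    Finset.sum_ite_eq', Finset.mem_univ, if_true] at h
  have h2 : (Jmat R (m+1) * N) (Sum.inl 0) (Sum.inr 0) = N (Sum.inr 0) (Sum.inr 0) := by
    rw [Matrix.mul_apply, Fintype.sum_sum_type]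
    simp [Jmat, fromBlocks_apply₁₁, fromBlocks_apply₁₂, Matrix.one_apply, ite_mul,
      Finset.sum_ite_eq, eq_comm]
  rw [h2] at h
  rw [h]
  simp [Jmat, fromBlocks_apply₁₂, Matrix.one_apply]

lemma stage2 (N1 : Matrix (Idx (m+1)) (Idx (m+1)) R) (hS : IsSymplectic N1)
    (hc : (fun k => N1 k (Sum.inl 0)) = Sum.elim (ee m R) 0) :
    ∃ N : Matrix (Idx (m+1)) (Idx (m+1)) R, IsSymplectic N ∧
      ((fun k => N k (Sum.inl 0)) = Sum.elim (ee m R) 0) ∧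
      ((fun k => N k (Sum.inr 0)) = Sum.elim (0 : Fin (m+1) → R) (ee m R)) ∧
      (P N → P N1) := by
  have h0B := col_elim N1 (Sum.inr 0)
  set wt : Fin (m+1) → R := fun i => N1 (Sum.inl i) (Sum.inr 0) with hwt
  set wb : Fin (m+1) → R := fun i => N1 (Sum.inr i) (Sum.inr 0) with hwb
  have hee : ee m R = (Pi.single 0 1 : Fin (m+1) → R) := rfl
  have hc' : ∀ k, N1 k (Sum.inl 0) = Sum.elim (Pi.single 0 1) (0 : Fin (m+1) → R) k := by
    intro k; rw [← hee]; exact congrFun hc k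
  have hwb0 : wb 0 = 1 := wb0_eq hS hc'
  set u : Fin (m+1) → R := wb - ee m R with hu
  have hu0 : u 0 = 0 := by
    rw [hu]; simp [Pi.sub_apply, hwb0]
  -- step 8 : clear the top of the second column
  set B8 : Matrix (Fin (m+1)) (Fin (m+1)) R :=
    (wt ⬝ᵥ wb) • vecMulVec (ee m R) (ee m R) - (vecMulVec wt (ee m R) + vecMulVec (ee m R) wt)
    with hB8
  have hB8s : B8ᵀ = B8 := by
    rw [hB8]
    simp only [transpose_sub, transpose_add, transpose_smul, vecMulVec_transpose]
    abel
  set N8 := (fromBlocks 1 B8 0 1) * N1 with hN8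
  have h8A : (fun k => N8 k (Sum.inl 0)) = Sum.elim (ee m R) 0 := by
    rw [hN8, colE hc, Matrix.mulVec_zero, add_zero]
  have h8v : wt + B8 *ᵥ wb = 0 := by
    rw [hB8, sub_mulVec, add_mulVec, smul_mulVec, vecMulVec_mulVec',
      vecMulVec_mulVec', vecMulVec_mulVec', ee_dot, hwb0, one_smul]
    module
  have h8B : (fun k => N8 k (Sum.inr 0)) = Sum.elim (0 : Fin (m+1) → R) wb := by
    rw [hN8, colE h0B, h8v]
  -- step 9 : put u into the bottom of the first column
  set C9 : Matrix (Fin (m+1)) (Fin (m+1)) R :=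
    vecMulVec u (ee m R) + vecMulVec (ee m R) u + vecMulVec u u with hC9
  have hC9s : C9ᵀ = C9 := by
    rw [hC9]
    simp only [transpose_add, vecMulVec_transpose]
    abel
  set N9 := (fromBlocks 1 0 C9 1) * N8 with hN9
  have hC9e : C9 *ᵥ ee m R = u := by
    rw [hC9, add_mulVec, add_mulVec, vecMulVec_mulVec', vecMulVec_mulVec',
      vecMulVec_mulVec', ee_dot, dot_ee, ee_zero, hu0, one_smul, zero_smul, zero_smul,
      add_zero, add_zero]
  have h9A : (fun k => N9 k (Sum.inl 0)) = Sum.elim (ee m R) u := by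
    rw [hN9, colF h8A, add_zero, hC9e]
  have h9B : (fun k => N9 k (Sum.inr 0)) = Sum.elim (0 : Fin (m+1) → R) wb := by
    rw [hN9, colF h8B, Matrix.mulVec_zero, zero_add]
  -- step 10 : put e into the top of the second column
  set B10 : Matrix (Fin (m+1)) (Fin (m+1)) R := vecMulVec (ee m R) (ee m R) with hB10
  have hB10s : B10ᵀ = B10 := by rw [hB10, vecMulVec_transpose]
  set N10 := (fromBlocks 1 B10 0 1) * N9 with hN10
  have h10A : (fun k => N10 k (Sum.inl 0)) = Sum.elim (ee m R) u := by
    rw [hN10, colE h9A, hB10, vecMulVec_mulVec', ee_dot, hu0, zero_smul, add_zero]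
  have h10B : (fun k => N10 k (Sum.inr 0)) = Sum.elim (ee m R) wb := by
    rw [hN10, colE h9B, hB10, vecMulVec_mulVec', ee_dot, hwb0, one_smul, zero_add]
  -- step 11 : clear the bottoms
  set C11 : Matrix (Fin (m+1)) (Fin (m+1)) R :=
    -(vecMulVec u (ee m R) + vecMulVec (ee m R) u) with hC11
  have hC11s : C11ᵀ = C11 := by
    rw [hC11]
    simp only [transpose_neg, transpose_add, vecMulVec_transpose]
    abel
  set N11 := (fromBlocks 1 0 C11 1) * N10 with hN11
  have hC11e : C11 *ᵥ ee m R = -u := by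
    rw [hC11, neg_mulVec, add_mulVec, vecMulVec_mulVec', vecMulVec_mulVec', ee_dot,
      dot_ee, ee_zero, hu0, one_smul, zero_smul, add_zero]
  have h11A : (fun k => N11 k (Sum.inl 0)) = Sum.elim (ee m R) 0 := by
    rw [hN11, colF h10A, hC11e, neg_add_cancel]
  have h11B : (fun k => N11 k (Sum.inr 0)) = Sum.elim (ee m R) (ee m R) := by
    rw [hN11, colF h10B, hC11e]
    have : -u + wb = ee m R := by rw [hu]; module
    rw [this]
  -- step 12 : clear the top of the second column
  set B12 : Matrix (Fin (m+1)) (Fin (m+1)) R := -vecMulVec (ee m R) (ee m R) with hB12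
  have hB12s : B12ᵀ = B12 := by rw [hB12, transpose_neg, vecMulVec_transpose]
  set N12 := (fromBlocks 1 B12 0 1) * N11 with hN12
  have h12A : (fun k => N12 k (Sum.inl 0)) = Sum.elim (ee m R) 0 := by
    rw [hN12, colE h11A, Matrix.mulVec_zero, add_zero]
  have h12B : (fun k => N12 k (Sum.inr 0)) = Sum.elim (0 : Fin (m+1) → R) (ee m R) := by
    rw [hN12, colE h11B, hB12, neg_mulVec, vecMulVec_mulVec', ee_dot, ee_zero, one_smul,
      add_neg_cancel]
  refine ⟨N12, ?_, h12A, h12B, ?_⟩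
  · rw [hN12, hN11, hN10, hN9, hN8]
    exact isSymplectic_mul (isSymplectic_E hB12s) (isSymplectic_mul (isSymplectic_F hC11s)
      (isSymplectic_mul (isSymplectic_E hB10s) (isSymplectic_mul (isSymplectic_F hC9s)
      (isSymplectic_mul (isSymplectic_E hB8s) hS))))
  · intro h
    rw [hN12] at h
    replace h := P_cancel ⟨B12, hB12s, Or.inl rfl⟩ h
    rw [hN11] at h
    replace h := P_cancel ⟨C11, hC11s, Or.inr rfl⟩ h
    rw [hN10] at h
    replace h := P_cancel ⟨B10, hB10s, Or.inl rfl⟩ h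
    rw [hN9] at h
    replace h := P_cancel ⟨C9, hC9s, Or.inr rfl⟩ h
    rw [hN8] at h
    exact P_cancel ⟨B8, hB8s, Or.inl rfl⟩ h

theorem main
    (hbsr : ∀ x₁ x₂ : R, (∃ r s : R, r * x₁ + s * x₂ = 1) → ∃ y : R, IsUnit (x₁ + y * x₂)) :
    ∀ {n : ℕ} (M : Matrix (Idx n) (Idx n) R), IsSymplectic M → P M := by
  intro n
  induction n with
  | zero =>
    intro M _
    refine ⟨[], by simp, ?_⟩
    ext x y
    cases x with
    | inl i => exact i.elim0
    | inr i => exact i.elim0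
  | succ m ih =>
    intro M hM
    obtain ⟨N1, hS1, hcol1, hP1⟩ := stage1 hbsr M hM
    obtain ⟨N, hS, hA, hB, hP2⟩ := stage2 N1 hS1 hcol1
    have hee : ee m R = (Pi.single 0 1 : Fin (m+1) → R) := rfl
    rw [hee] at hA hB
    have hA' : ∀ k, N k (Sum.inl 0) = Sum.elim (Pi.single 0 1) (0 : Fin (m+1) → R) k :=
      fun k => congrFun hA k
    have hB' : ∀ k, N k (Sum.inr 0) = Sum.elim (0 : Fin (m+1) → R) (Pi.single 0 1) k :=
      fun k => congrFun hB k
    obtain ⟨hr1, hr2⟩ := rows_std hS hA' hB'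
    have hEq := eq_liftB hA' hB' hr1 hr2
    have hsymp' := hS
    rw [hEq] at hsymp'
    have hsymp := symp_compress hsymp'
    obtain ⟨L', hL', hprod⟩ := ih _ hsymp
    have hPN : P N := by
      refine ⟨L'.map lift, ?_, ?_⟩
      · intro E hE
        obtain ⟨E', hE', rfl⟩ := List.mem_map.1 hE
        exact lift_elem (hL' E' hE')
      · rw [← lift_prod, ← hprod, lift_fromBlocks]
        exact hEq
    exact hP1 (hP2 hPN)

end Main2
end Stmt8Aux


/-- If `R` has Bass stable rank one, every symplectic matrix is a product of elementary
symplectic matrices. -/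
theorem stmt8 {R : Type*} [CommRing R] {n : ℕ}
    (hbsr : ∀ x₁ x₂ : R, (∃ r s : R, r * x₁ + s * x₂ = 1) → ∃ y : R, IsUnit (x₁ + y * x₂))
    (M : Matrix (Idx n) (Idx n) R) (hM : IsSymplectic M) :
    ∃ L : List (Matrix (Idx n) (Idx n) R),
      (∀ E ∈ L, IsElemSymp E) ∧ M = L.prod :=
  Stmt8Aux.main hbsr M hM
end

section
/- There is an open neighbourhood V of the identity in Sp_{2n}(ℂ) and an integer N and continuous maps E₁,...,E_N from V to the set of elementary symplectic matrices such that E_i(I) = I and M = E₁(M)···E_N(M) for all M ∈ V. -/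
open Matrix

namespace SpFact

variable {n : ℕ}

abbrev MatN (n : ℕ) := Matrix (Fin n) (Fin n) ℂ
abbrev Mat2 (n : ℕ) := Matrix (Idx n) (Idx n) ℂ

def UU (B : MatN n) : Mat2 n := Matrix.fromBlocks 1 B 0 1
def LL (C : MatN n) : Mat2 n := Matrix.fromBlocks 1 0 C 1
noncomputable def DD (P : MatN n) : Mat2 n := Matrix.fromBlocks P 0 0 P⁻¹ᵀ

lemma UU_zero : UU (0 : MatN n) = 1 := by simp [UU, Matrix.fromBlocks_one]
lemma LL_zero : LL (0 : MatN n) = 1 := by simp [LL, Matrix.fromBlocks_one]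

lemma isElemSymp_UU {B : MatN n} (h : Bᵀ = B) : IsElemSymp (UU B) := ⟨B, h, Or.inl rfl⟩
lemma isElemSymp_LL {C : MatN n} (h : Cᵀ = C) : IsElemSymp (LL C) := ⟨C, h, Or.inr rfl⟩

lemma DD_mul (P Q : MatN n) : DD P * DD Q = DD (P * Q) := by
  simp [DD, Matrix.fromBlocks_multiply, Matrix.mul_inv_rev, Matrix.transpose_mul]

lemma DD_one : DD (1 : MatN n) = 1 := by
  simp [DD, inv_one, Matrix.fromBlocks_one]

/-! ### The scalar-square-root splitting -/

noncomputable def qd (W : MatN n) : ℝ := ∑ a, ∑ b, ‖W a b‖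
noncomputable def sd (W : MatN n) : ℝ := Real.sqrt (qd W)
def Rm (k : Fin n) (W : MatN n) : MatN n := W + Wᵀ - Matrix.single k k (W k k)
noncomputable def B1 (k : Fin n) (W : MatN n) : MatN n :=
  ((sd W : ℝ) : ℂ) • Matrix.single k k (1 : ℂ)
noncomputable def C1 (k : Fin n) (W : MatN n) : MatN n := (((sd W)⁻¹ : ℝ) : ℂ) • Rm k W
noncomputable def B2 (k : Fin n) (W : MatN n) : MatN n :=
  -((1 + B1 k W * C1 k W)⁻¹ * B1 k W)
noncomputable def C2 (k : Fin n) (W : MatN n) : MatN n :=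
  -((1 + B1 k W * C1 k W)ᵀ * C1 k W)

lemma qd_nonneg (W : MatN n) : 0 ≤ qd W :=
  Finset.sum_nonneg fun _ _ => Finset.sum_nonneg fun _ _ => norm_nonneg _

lemma entry_le_qd (W : MatN n) (a b : Fin n) : ‖W a b‖ ≤ qd W := by
  have h1 : ‖W a b‖ ≤ ∑ b', ‖W a b'‖ :=
    Finset.single_le_sum (f := fun b' => ‖W a b'‖)
      (fun _ _ => norm_nonneg _) (Finset.mem_univ b)
  have h2 : (∑ b', ‖W a b'‖) ≤ qd W :=
    Finset.single_le_sum (f := fun a' => ∑ b', ‖W a' b'‖)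
      (fun _ _ => Finset.sum_nonneg fun _ _ => norm_nonneg _) (Finset.mem_univ a)
  exact h1.trans h2

lemma eq_zero_of_qd_eq_zero {W : MatN n} (h : qd W = 0) : W = 0 := by
  ext a b
  have := entry_le_qd W a b
  rw [h] at this
  simpa using le_antisymm this (norm_nonneg _)

lemma qd_zero : qd (0 : MatN n) = 0 := by simp [qd]
lemma sd_zero : sd (0 : MatN n) = 0 := by simp [sd, qd_zero]

lemma Rm_zero (k : Fin n) : Rm k (0 : MatN n) = 0 := by simp [Rm]
lemma B1_zero (k : Fin n) : B1 k (0 : MatN n) = 0 := by simp [B1, sd_zero]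
lemma C1_zero (k : Fin n) : C1 k (0 : MatN n) = 0 := by simp [C1, Rm_zero]
lemma B2_zero (k : Fin n) : B2 k (0 : MatN n) = 0 := by simp [B2, B1_zero]
lemma C2_zero (k : Fin n) : C2 k (0 : MatN n) = 0 := by simp [C2, C1_zero]

lemma Rm_transpose (k : Fin n) (W : MatN n) : (Rm k W)ᵀ = Rm k W := by
  ext a b
  simp only [Rm, Matrix.transpose_apply, Matrix.sub_apply, Matrix.add_apply,
    Matrix.single, Matrix.of_apply]
  by_cases h1 : k = a <;> by_cases h2 : k = b <;> simp [h1, h2] <;> ring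

lemma B1_transpose (k : Fin n) (W : MatN n) : (B1 k W)ᵀ = B1 k W := by
  ext a b
  simp only [B1, Matrix.transpose_apply, Matrix.smul_apply, Matrix.single,
    Matrix.of_apply]
  by_cases h1 : k = a <;> by_cases h2 : k = b <;> simp [h1, h2]

lemma C1_transpose (k : Fin n) (W : MatN n) : (C1 k W)ᵀ = C1 k W := by
  simp only [C1, Matrix.transpose_smul, Rm_transpose]

lemma B1_mul_C1 (k : Fin n) (W : MatN n) (hsupp : ∀ a b, a ≠ k → W a b = 0) :
    B1 k W * C1 k W = W := by
  rcases eq_or_ne (qd W) 0 with h | h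
  · rw [eq_zero_of_qd_eq_zero h]; simp [B1_zero, C1_zero]
  · have hs : sd W ≠ 0 := by
      simp only [sd]
      exact Real.sqrt_ne_zero'.mpr (lt_of_le_of_ne (qd_nonneg W) (Ne.symm h))
    have hcoef : ((sd W : ℝ) : ℂ) * (((sd W)⁻¹ : ℝ) : ℂ) = 1 := by
      rw [← Complex.ofReal_mul, mul_inv_cancel₀ hs, Complex.ofReal_one]
    rw [B1, C1, Matrix.smul_mul, Matrix.mul_smul, smul_smul, hcoef, one_smul]
    ext a b
    rw [Matrix.mul_apply]
    rcases eq_or_ne a k with rfl | ha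
    · rw [Finset.sum_eq_single a]
      · simp only [Matrix.single, Matrix.of_apply, and_self, if_pos rfl, one_mul]
        simp only [Rm, Matrix.sub_apply, Matrix.add_apply, Matrix.transpose_apply,
          Matrix.single, Matrix.of_apply]
        rcases eq_or_ne b a with rfl | hb
        · simp
        · have : W b a = 0 := hsupp b a hb
          simp [this, hb, (Ne.symm hb)]
      · intro c _ hc
        simp [Matrix.single, Ne.symm hc]
      · intro hmem; exact absurd (Finset.mem_univ a) hmem
    · have hW : W a b = 0 := hsupp a b ha
      rw [hW, Finset.sum_eq_zero]
      intro c _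
      simp [Matrix.single, Ne.symm ha]

/-! ### Core four-shear algebra -/

section core
variable (b c : MatN n)

lemma t_eq (hb : bᵀ = b) (hc : cᵀ = c) : (1 + b * c)ᵀ = 1 + c * b := by
  rw [Matrix.transpose_add, Matrix.transpose_one, Matrix.transpose_mul, hb, hc]

lemma hut (hu : IsUnit (1 + b * c).det) : IsUnit ((1 + b * c)ᵀ).det := by
  rwa [Matrix.det_transpose]

lemma hcomm (hb : bᵀ = b) (hc : cᵀ = c) : (1 + b * c) * b = b * (1 + b * c)ᵀ := by
  rw [t_eq b c hb hc]; noncomm_ring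

lemma B2_core_transpose (hb : bᵀ = b) (hc : cᵀ = c) (hu : IsUnit (1 + b * c).det) :
    (-((1 + b * c)⁻¹ * b))ᵀ = -((1 + b * c)⁻¹ * b) := by
  have h1 : (1 + b * c)⁻¹ * b = b * ((1 + b * c)ᵀ)⁻¹ := by
    calc (1 + b * c)⁻¹ * b
        = (1 + b * c)⁻¹ * ((b * (1 + b * c)ᵀ) * ((1 + b * c)ᵀ)⁻¹) := by
          rw [Matrix.mul_assoc, Matrix.mul_nonsing_inv _ (hut b c hu), Matrix.mul_one]
      _ = (1 + b * c)⁻¹ * (((1 + b * c) * b) * ((1 + b * c)ᵀ)⁻¹) := by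
          rw [hcomm b c hb hc]
      _ = b * ((1 + b * c)ᵀ)⁻¹ := by
          rw [← Matrix.mul_assoc, ← Matrix.mul_assoc, Matrix.nonsing_inv_mul _ hu,
            Matrix.one_mul]
  rw [Matrix.transpose_neg, Matrix.transpose_mul, hb, Matrix.transpose_nonsing_inv, ← h1]

lemma C2_core_transpose (hb : bᵀ = b) (hc : cᵀ = c) :
    (-((1 + b * c)ᵀ * c))ᵀ = -((1 + b * c)ᵀ * c) := by
  rw [t_eq b c hb hc, Matrix.transpose_neg, Matrix.transpose_mul, hc, Matrix.transpose_add,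
    Matrix.transpose_one, Matrix.transpose_mul, hb, hc]
  noncomm_ring

lemma quad_core (hb : bᵀ = b) (hc : cᵀ = c) (hu : IsUnit (1 + b * c).det) :
    UU b * LL c * UU (-((1 + b * c)⁻¹ * b)) * LL (-((1 + b * c)ᵀ * c))
      = DD (1 + b * c) := by
  have keyT : (1 + b * c)ᵀ * (1 - c * ((1 + b * c)⁻¹ * b)) = 1 := by
    rw [t_eq b c hb hc]
    have expand : (1 + c * b) * (1 - c * ((1 + b * c)⁻¹ * b))
        = 1 + c * b - (c * (1 + b * c)) * ((1 + b * c)⁻¹ * b) := by noncomm_ring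
    rw [expand, Matrix.mul_assoc c, ← Matrix.mul_assoc (1 + b * c),
      Matrix.mul_nonsing_inv _ hu, Matrix.one_mul]
    abel
  have hDdinv : ((1 + b * c)ᵀ)⁻¹ = 1 - c * ((1 + b * c)⁻¹ * b) :=
    Matrix.inv_eq_right_inv keyT
  have keyT2 : (1 - c * ((1 + b * c)⁻¹ * b)) * (1 + b * c)ᵀ = 1 :=
    mul_eq_one_comm.mp keyT
  have eB : (1 + b * c) * -((1 + b * c)⁻¹ * b) + b = 0 := by
    rw [Matrix.mul_neg, ← Matrix.mul_assoc, Matrix.mul_nonsing_inv _ hu, Matrix.one_mul,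
      neg_add_cancel]
  have step2 : c + (1 - c * ((1 + b * c)⁻¹ * b)) * -((1 + b * c)ᵀ * c) = 0 := by
    rw [Matrix.mul_neg, ← Matrix.mul_assoc, keyT2, Matrix.one_mul, add_neg_cancel]
  have step1 : UU b * LL c * UU (-((1 + b * c)⁻¹ * b))
      = Matrix.fromBlocks (1 + b * c) 0 c (1 - c * ((1 + b * c)⁻¹ * b)) := by
    simp only [UU, LL, Matrix.fromBlocks_multiply, Matrix.mul_one, Matrix.one_mul,
      Matrix.mul_zero, Matrix.zero_mul, add_zero, zero_add, mul_one, one_mul]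
    rw [eB]
    rw [Matrix.mul_neg, sub_eq_add_neg, add_comm (-(c * ((1 + b * c)⁻¹ * b))) 1]
  rw [step1, LL, DD, Matrix.fromBlocks_multiply]
  simp only [Matrix.mul_one, Matrix.one_mul, Matrix.mul_zero, Matrix.zero_mul, add_zero,
    zero_add]
  rw [step2, Matrix.transpose_nonsing_inv, hDdinv]
end core

section quad
variable (k : Fin n) (W : MatN n)

lemma B2_transpose (hsupp : ∀ a b, a ≠ k → W a b = 0) (hu : IsUnit (1 + W).det) :
    (B2 k W)ᵀ = B2 k W := by
  have hu' : IsUnit (1 + B1 k W * C1 k W).det := by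
    rw [B1_mul_C1 k W hsupp]; exact hu
  exact B2_core_transpose _ _ (B1_transpose k W) (C1_transpose k W) hu'

lemma C2_transpose : (C2 k W)ᵀ = C2 k W :=
  C2_core_transpose _ _ (B1_transpose k W) (C1_transpose k W)

lemma quad_eq (hsupp : ∀ a b, a ≠ k → W a b = 0) (hu : IsUnit (1 + W).det) :
    UU (B1 k W) * LL (C1 k W) * UU (B2 k W) * LL (C2 k W) = DD (1 + W) := by
  have hu' : IsUnit (1 + B1 k W * C1 k W).det := by
    rw [B1_mul_C1 k W hsupp]; exact hu
  rw [B2, C2, quad_core _ _ (B1_transpose k W) (C1_transpose k W) hu',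
    B1_mul_C1 k W hsupp]
end quad

/-! ### Row elimination chain -/

def Bm (P : MatN n) (j : ℕ) : MatN n :=
  Matrix.of fun r c => if (r : ℕ) < j then (1 : MatN n) r c else P r c

noncomputable def Hm (P : MatN n) (j : ℕ) : MatN n := Bm P j * (Bm P (j + 1))⁻¹

lemma Bm_zero (P : MatN n) : Bm P 0 = P := by ext r c; simp [Bm]

lemma Bm_ge (P : MatN n) {j : ℕ} (h : n ≤ j) : Bm P j = 1 := by
  ext r c; simp [Bm, lt_of_lt_of_le r.isLt h]

lemma Bm_id (j : ℕ) : Bm (1 : MatN n) j = 1 := by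
  ext r c; simp only [Bm, Matrix.of_apply, ite_self]

lemma Hm_id (j : ℕ) : Hm (1 : MatN n) j = 1 := by
  rw [Hm, Bm_id, Bm_id, inv_one, Matrix.one_mul]

lemma Hm_support (P : MatN n) (j : ℕ) (hu : IsUnit (Bm P (j + 1)).det) (a b : Fin n)
    (ha : (a : ℕ) ≠ j) : Hm P j a b = (1 : MatN n) a b := by
  have hrow : ∀ c, Bm P j a c = Bm P (j + 1) a c := by
    intro c
    simp only [Bm, Matrix.of_apply]
    rcases lt_trichotomy (a : ℕ) j with h | h | h
    · rw [if_pos h, if_pos (Nat.lt_succ_of_lt h)]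
    · exact absurd h ha
    · rw [if_neg (by omega), if_neg (by omega)]
  have h2 : Hm P j a b = (Bm P (j + 1) * (Bm P (j + 1))⁻¹) a b := by
    rw [Hm, Matrix.mul_apply, Matrix.mul_apply]
    exact Finset.sum_congr rfl fun c _ => by rw [hrow c]
  rw [h2, Matrix.mul_nonsing_inv _ hu]

lemma Hm_det_isUnit (P : MatN n) (j : ℕ) (h1 : IsUnit (Bm P j).det)
    (h2 : IsUnit (Bm P (j + 1)).det) : IsUnit (Hm P j).det := by
  rw [Hm, Matrix.det_mul]
  exact h1.mul (Matrix.isUnit_nonsing_inv_det _ h2)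

lemma Hm_prod (P : MatN n) (hu : ∀ t, IsUnit (Bm P t).det) :
    ∀ (m i : ℕ), (List.ofFn fun j : Fin m => Hm P (i + j)).prod = Bm P i * (Bm P (i + m))⁻¹
  | 0, i => by
      simp only [List.ofFn_zero, List.prod_nil, Nat.add_zero]
      rw [Matrix.mul_nonsing_inv _ (hu i)]
  | (m + 1), i => by
      rw [List.ofFn_succ, List.prod_cons]
      have hfe : (List.ofFn fun j : Fin m => Hm P (i + (j.succ : ℕ)))
          = List.ofFn fun j : Fin m => Hm P ((i + 1) + j) := by
        congr 1
        funext j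
        have hv : i + (j.succ : ℕ) = (i + 1) + (j : ℕ) := by rw [Fin.val_succ]; omega
        rw [hv]
      have h0 : i + ((0 : Fin (m + 1)) : ℕ) = i := by simp
      rw [hfe, Hm_prod P hu m (i + 1), h0, Hm, Matrix.mul_assoc,
        ← Matrix.mul_assoc ((Bm P (i + 1))⁻¹),
        Matrix.nonsing_inv_mul _ (hu (i + 1)), Matrix.one_mul]
      have harith : i + 1 + m = i + (m + 1) := by omega
      rw [harith]

lemma Hm_prod_full (P : MatN n) (hu : ∀ t, IsUnit (Bm P t).det) :
    (List.ofFn fun j : Fin n => Hm P j).prod = P := by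
  have h := Hm_prod P hu n 0
  simp only [Nat.zero_add] at h
  rw [h, Bm_zero, Bm_ge P (le_refl n), inv_one, Matrix.mul_one]

/-! ### Symplectic block relations -/

lemma J_mul_J : (Jmat ℂ n) * (Jmat ℂ n) = -1 := by
  simp only [Jmat, Matrix.fromBlocks_multiply, Matrix.mul_zero, Matrix.zero_mul,
    Matrix.mul_one, Matrix.one_mul, Matrix.mul_neg, Matrix.neg_mul, add_zero, zero_add,
    neg_zero, Matrix.one_mul]
  have hneg : (-1 : Mat2 n) = Matrix.fromBlocks (-1) 0 0 (-1) := by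
    rw [← Matrix.fromBlocks_one]
    ext (i | i) (j | j) <;> simp [Matrix.fromBlocks]
  rw [hneg]

lemma isSymplectic_one : IsSymplectic (1 : Mat2 n) := by
  simp [IsSymplectic]

lemma isSymplectic_det_isUnit {M : Mat2 n} (h : IsSymplectic M) : IsUnit M.det := by
  have hJ2 : (Jmat ℂ n).det * (Jmat ℂ n).det = 1 := by
    rw [← Matrix.det_mul, J_mul_J]
    have : ((-1 : Mat2 n)) = (-1 : ℂ) • (1 : Mat2 n) := by simp
    rw [this, Matrix.det_smul, Matrix.det_one, mul_one]
    simp [Fintype.card_sum, Even.neg_one_pow (Even.add_self n)]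
  have hJu : (Jmat ℂ n).det ≠ 0 := by
    intro h0; rw [h0, zero_mul] at hJ2; exact zero_ne_one hJ2
  have hdet := congrArg Matrix.det h
  rw [Matrix.det_mul, Matrix.det_mul, Matrix.det_transpose] at hdet
  have h2 : M.det * M.det * (Jmat ℂ n).det = 1 * (Jmat ℂ n).det := by
    rw [one_mul]
    conv_rhs => rw [← hdet]
    ring
  have h3 : M.det * M.det = 1 := mul_right_cancel₀ hJu h2
  exact IsUnit.of_mul_eq_one _ h3

lemma isSymplectic_mul_transpose {M : Mat2 n} (h : IsSymplectic M) :
    M * Jmat ℂ n * Mᵀ = Jmat ℂ n := by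
  have h1 : ((-(Jmat ℂ n)) * Mᵀ * Jmat ℂ n) * M = 1 := by
    calc ((-(Jmat ℂ n)) * Mᵀ * Jmat ℂ n) * M
        = (-(Jmat ℂ n)) * (Mᵀ * Jmat ℂ n * M) := by
          simp only [Matrix.mul_assoc]
      _ = (-(Jmat ℂ n)) * Jmat ℂ n := by rw [h]
      _ = 1 := by rw [Matrix.neg_mul, J_mul_J, neg_neg]
  have h2 : M * ((-(Jmat ℂ n)) * Mᵀ * Jmat ℂ n) = 1 := mul_eq_one_comm.mp h1
  have h3 : (M * (-(Jmat ℂ n)) * Mᵀ) * Jmat ℂ n = 1 := by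
    calc (M * (-(Jmat ℂ n)) * Mᵀ) * Jmat ℂ n
        = M * ((-(Jmat ℂ n)) * Mᵀ * Jmat ℂ n) := by simp only [Matrix.mul_assoc]
      _ = 1 := h2
  have h4 : M * (-(Jmat ℂ n)) * Mᵀ = -(Jmat ℂ n) := by
    calc M * (-(Jmat ℂ n)) * Mᵀ
        = (M * (-(Jmat ℂ n)) * Mᵀ) * (Jmat ℂ n * (-(Jmat ℂ n))) := by
          rw [show Jmat ℂ n * -(Jmat ℂ n) = 1 from by
            rw [Matrix.mul_neg, J_mul_J, neg_neg], Matrix.mul_one]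
      _ = ((M * (-(Jmat ℂ n)) * Mᵀ) * Jmat ℂ n) * (-(Jmat ℂ n)) := by
          simp only [Matrix.mul_assoc]
      _ = -(Jmat ℂ n) := by rw [h3, Matrix.one_mul]
  have h5 : -(M * Jmat ℂ n * Mᵀ) = -(Jmat ℂ n) := by
    rw [← h4]; simp only [Matrix.mul_neg, Matrix.neg_mul]
  exact neg_inj.mp h5

section blocks
variable (M : Mat2 n)

local notation "A" => M.toBlocks₁₁
local notation "B" => M.toBlocks₁₂
local notation "C" => M.toBlocks₂₁
local notation "D" => M.toBlocks₂₂

lemma key1 (h : IsSymplectic M) :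
    Matrix.fromBlocks (-(Cᵀ * A) + Aᵀ * C) (-(Cᵀ * B) + Aᵀ * D)
      (-(Dᵀ * A) + Bᵀ * C) (-(Dᵀ * B) + Bᵀ * D) = Matrix.fromBlocks 0 1 (-1) 0 := by
  have hM : Matrix.fromBlocks A B C D = M := Matrix.fromBlocks_toBlocks M
  have key : (Matrix.fromBlocks A B C D)ᵀ * Jmat ℂ n * (Matrix.fromBlocks A B C D)
      = Jmat ℂ n := by rw [hM]; exact h
  rw [Jmat, Matrix.fromBlocks_transpose, Matrix.fromBlocks_multiply,
    Matrix.fromBlocks_multiply] at key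
  simpa only [Matrix.mul_zero, Matrix.zero_mul, Matrix.mul_one, Matrix.one_mul,
    Matrix.mul_neg, Matrix.neg_mul, add_zero, zero_add, neg_zero] using key

lemma key2 (h : IsSymplectic M) :
    Matrix.fromBlocks (-(B * Aᵀ) + A * Bᵀ) (-(B * Cᵀ) + A * Dᵀ)
      (-(D * Aᵀ) + C * Bᵀ) (-(D * Cᵀ) + C * Dᵀ) = Matrix.fromBlocks 0 1 (-1) 0 := by
  have hM : Matrix.fromBlocks A B C D = M := Matrix.fromBlocks_toBlocks M
  have key : (Matrix.fromBlocks A B C D) * Jmat ℂ n * (Matrix.fromBlocks A B C D)ᵀ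
      = Jmat ℂ n := by rw [hM]; exact isSymplectic_mul_transpose h
  rw [Jmat, Matrix.fromBlocks_transpose, Matrix.fromBlocks_multiply,
    Matrix.fromBlocks_multiply] at key
  simpa only [Matrix.mul_zero, Matrix.zero_mul, Matrix.mul_one, Matrix.one_mul,
    Matrix.mul_neg, Matrix.neg_mul, add_zero, zero_add, neg_zero] using key

lemma rel_BD (h : IsSymplectic M) : Bᵀ * D = Dᵀ * B := by
  have e := congrArg Matrix.toBlocks₂₂ (key1 M h)
  simp only [Matrix.toBlocks_fromBlocks₂₂] at e
  have h0 : -(Dᵀ * B) + Bᵀ * D = 0 := e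
  linear_combination (norm := noncomm_ring) h0

lemma rel_CD (h : IsSymplectic M) : C * Dᵀ = D * Cᵀ := by
  have e := congrArg Matrix.toBlocks₂₂ (key2 M h)
  simp only [Matrix.toBlocks_fromBlocks₂₂] at e
  have h0 : -(D * Cᵀ) + C * Dᵀ = 0 := e
  linear_combination (norm := noncomm_ring) h0

lemma rel_AD (h : IsSymplectic M) : A * Dᵀ = 1 + B * Cᵀ := by
  have e := congrArg Matrix.toBlocks₁₂ (key2 M h)
  simp only [Matrix.toBlocks_fromBlocks₁₂] at e
  have h0 : -(B * Cᵀ) + A * Dᵀ = 1 := e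
  linear_combination (norm := noncomm_ring) h0

lemma Xm_transpose (h : IsSymplectic M) (hD : IsUnit (M.toBlocks₂₂).det) :
    (B * D⁻¹)ᵀ = B * D⁻¹ := by
  have hDt : IsUnit ((Dᵀ).det) := by rwa [Matrix.det_transpose]
  rw [Matrix.transpose_mul, Matrix.transpose_nonsing_inv]
  calc (Dᵀ)⁻¹ * Bᵀ = (Dᵀ)⁻¹ * ((Bᵀ * D) * D⁻¹) := by
        rw [Matrix.mul_assoc, Matrix.mul_nonsing_inv _ hD, Matrix.mul_one]
    _ = (Dᵀ)⁻¹ * ((Dᵀ * B) * D⁻¹) := by rw [rel_BD M h]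
    _ = B * D⁻¹ := by
        rw [← Matrix.mul_assoc, ← Matrix.mul_assoc, Matrix.nonsing_inv_mul _ hDt,
          Matrix.one_mul]

lemma Ym_transpose (h : IsSymplectic M) : (C * Dᵀ)ᵀ = C * Dᵀ := by
  rw [Matrix.transpose_mul, Matrix.transpose_transpose, rel_CD M h]

lemma stepA (h : IsSymplectic M) (hD : IsUnit (M.toBlocks₂₂).det) :
    M = UU (B * D⁻¹) * (LL (C * Dᵀ) * DD ((Dᵀ)⁻¹)) := by
  have hDt : IsUnit ((Dᵀ).det) := by rwa [Matrix.det_transpose]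
  have hDD : DD ((Dᵀ)⁻¹) = Matrix.fromBlocks ((Dᵀ)⁻¹) 0 0 D := by
    rw [DD, Matrix.nonsing_inv_nonsing_inv _ hDt, Matrix.transpose_transpose]
  have hXD : (B * D⁻¹) * D = B := by
    rw [Matrix.mul_assoc, Matrix.nonsing_inv_mul _ hD, Matrix.mul_one]
  have hYD : (C * Dᵀ) * (Dᵀ)⁻¹ = C := by
    rw [Matrix.mul_assoc, Matrix.mul_nonsing_inv _ hDt, Matrix.mul_one]
  have hCt : Cᵀ * (Dᵀ)⁻¹ = D⁻¹ * C := by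
    have h1 : D⁻¹ * (C * Dᵀ) * (Dᵀ)⁻¹ = D⁻¹ * (D * Cᵀ) * (Dᵀ)⁻¹ := by rw [rel_CD M h]
    calc Cᵀ * (Dᵀ)⁻¹ = D⁻¹ * (D * Cᵀ) * (Dᵀ)⁻¹ := by
          rw [← Matrix.mul_assoc, Matrix.nonsing_inv_mul _ hD, Matrix.one_mul]
      _ = D⁻¹ * (C * Dᵀ) * (Dᵀ)⁻¹ := h1.symm
      _ = D⁻¹ * C := by
          rw [Matrix.mul_assoc, Matrix.mul_assoc, Matrix.mul_nonsing_inv _ hDt,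
            Matrix.mul_one]
  have hA : (Dᵀ)⁻¹ + B * D⁻¹ * (C * Dᵀ * (Dᵀ)⁻¹) = A := by
    rw [hYD, Matrix.mul_assoc, ← hCt]
    calc (Dᵀ)⁻¹ + B * ((C)ᵀ * (Dᵀ)⁻¹)
        = (1 + B * (C)ᵀ) * (Dᵀ)⁻¹ := by noncomm_ring
      _ = (A * Dᵀ) * (Dᵀ)⁻¹ := by rw [rel_AD M h]
      _ = A := by rw [Matrix.mul_assoc, Matrix.mul_nonsing_inv _ hDt, Matrix.mul_one]
  have prod_eq : UU (B * D⁻¹) * (LL (C * Dᵀ) * DD ((Dᵀ)⁻¹))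
      = Matrix.fromBlocks ((Dᵀ)⁻¹ + B * D⁻¹ * (C * Dᵀ * (Dᵀ)⁻¹)) (B * D⁻¹ * D)
          (C * Dᵀ * (Dᵀ)⁻¹) D := by
    rw [hDD, UU, LL, Matrix.fromBlocks_multiply, Matrix.fromBlocks_multiply]
    simp only [Matrix.mul_zero, Matrix.zero_mul, Matrix.mul_one, Matrix.one_mul, add_zero,
      zero_add, Matrix.mul_assoc]
  rw [prod_eq, hA, hXD, hYD, Matrix.fromBlocks_toBlocks]
end blocks

end SpFact

namespace SpFact

variable {n : ℕ}

/-! ### Matrix-level data maps and the neighbourhood -/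

noncomputable def Pmf (M : Mat2 n) : MatN n := ((M.toBlocks₂₂)ᵀ)⁻¹
noncomputable def Wmf (j : ℕ) (M : Mat2 n) : MatN n := Hm (Pmf M) j - 1

def detSet (n : ℕ) : Set (Mat2 n) := {M | (M.toBlocks₂₂).det ≠ 0}

def Uset (n : ℕ) : Set (Mat2 n) :=
  {M | (M.toBlocks₂₂).det ≠ 0 ∧ ∀ j : Fin (n + 1), (Bm (Pmf M) (j : ℕ)).det ≠ 0}

def Vset (n : ℕ) : Set (Mat2 n) := Uset n ∩ {M | IsSymplectic M}

lemma Uset_subset_detSet : Uset n ⊆ detSet n := fun _ hM => hM.1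

lemma Uset_Bm_det {M : Mat2 n} (hM : M ∈ Uset n) (t : ℕ) : IsUnit (Bm (Pmf M) t).det := by
  rcases le_or_gt t n with h | h
  · have := hM.2 ⟨t, Nat.lt_succ_of_le h⟩
    exact isUnit_iff_ne_zero.mpr this
  · rw [Bm_ge _ (le_of_lt h), Matrix.det_one]; exact isUnit_one

lemma toBlocks₂₂_one : (1 : Mat2 n).toBlocks₂₂ = 1 := by
  ext i j
  simp [Matrix.toBlocks₂₂, Matrix.one_apply, Sum.inr.injEq]

lemma toBlocks₁₂_one : (1 : Mat2 n).toBlocks₁₂ = 0 := by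
  ext i j
  simp [Matrix.toBlocks₁₂, Matrix.one_apply]

lemma toBlocks₂₁_one : (1 : Mat2 n).toBlocks₂₁ = 0 := by
  ext i j
  simp [Matrix.toBlocks₂₁, Matrix.one_apply]

lemma Pmf_one : Pmf (1 : Mat2 n) = 1 := by
  rw [Pmf, toBlocks₂₂_one, Matrix.transpose_one, inv_one]

lemma Wmf_one (j : ℕ) : Wmf j (1 : Mat2 n) = 0 := by
  rw [Wmf, Pmf_one, Hm_id, sub_self]

lemma one_mem_Uset : (1 : Mat2 n) ∈ Uset n := by
  constructor
  · rw [toBlocks₂₂_one, Matrix.det_one]; exact one_ne_zero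
  · intro j
    rw [Pmf_one, Bm_id, Matrix.det_one]; exact one_ne_zero

lemma one_mem_Vset : (1 : Mat2 n) ∈ Vset n := ⟨one_mem_Uset, isSymplectic_one⟩

lemma Wmf_support {M : Mat2 n} (hM : M ∈ Uset n) (k : Fin n) :
    ∀ a b, a ≠ k → Wmf (k : ℕ) M a b = 0 := by
  intro a b ha
  have h1 : Hm (Pmf M) (k : ℕ) a b = (1 : MatN n) a b :=
    Hm_support _ _ (Uset_Bm_det hM _) a b fun hv => ha (Fin.val_injective hv)
  simp [Wmf, Matrix.sub_apply, h1]

lemma one_add_Wmf (j : ℕ) (M : Mat2 n) : 1 + Wmf j M = Hm (Pmf M) j := by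
  rw [Wmf]; abel

lemma Wmf_unit {M : Mat2 n} (hM : M ∈ Uset n) (j : ℕ) : IsUnit (1 + Wmf j M).det := by
  rw [one_add_Wmf]
  exact Hm_det_isUnit _ _ (Uset_Bm_det hM _) (Uset_Bm_det hM _)

/-! ### Continuity -/

lemma cont_toBlocks₂₂ : Continuous fun M : Mat2 n => M.toBlocks₂₂ :=
  continuous_matrix fun i j => continuous_id.matrix_elem _ _

lemma cont_toBlocks₁₂ : Continuous fun M : Mat2 n => M.toBlocks₁₂ :=
  continuous_matrix fun i j => continuous_id.matrix_elem _ _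

lemma cont_toBlocks₂₁ : Continuous fun M : Mat2 n => M.toBlocks₂₁ :=
  continuous_matrix fun i j => continuous_id.matrix_elem _ _

lemma contOn_inv {X : Type*} [TopologicalSpace X] {f : X → MatN n} {s : Set X}
    (hf : ContinuousOn f s) (h : ∀ x ∈ s, (f x).det ≠ 0) :
    ContinuousOn (fun x => (f x)⁻¹) s := by
  have heq : ∀ x ∈ s, (f x)⁻¹ = ((f x).det)⁻¹ • (f x).adjugate := fun x _ => by
    rw [Matrix.inv_def, Ring.inverse_eq_inv']
  refine ContinuousOn.congr ?_ heq
  have hdet : ContinuousOn (fun x => (f x).det) s :=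
    Continuous.comp_continuousOn (continuous_id.matrix_det) hf
  exact (hdet.inv₀ h).smul (Continuous.comp_continuousOn (g := fun A : MatN n => A.adjugate) (continuous_id.matrix_adjugate) hf)

lemma contOn_Pmf : ContinuousOn (fun M : Mat2 n => Pmf M) (detSet n) := by
  refine contOn_inv (Continuous.continuousOn cont_toBlocks₂₂.matrix_transpose) ?_
  intro M hM
  rw [Matrix.det_transpose]
  exact hM

lemma cont_Bm (j : ℕ) : Continuous fun P : MatN n => Bm P j := by
  apply continuous_matrix
  intro r c
  by_cases h : (r : ℕ) < j
  · simp only [Bm, Matrix.of_apply, if_pos h]; exact continuous_const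
  · simp only [Bm, Matrix.of_apply, if_neg h]; exact continuous_id.matrix_elem _ _

lemma contOn_Bmf (j : ℕ) : ContinuousOn (fun M : Mat2 n => Bm (Pmf M) j) (detSet n) :=
  Continuous.comp_continuousOn (g := fun P : MatN n => Bm P j) (cont_Bm j) contOn_Pmf

lemma contOn_Hmf (j : ℕ) : ContinuousOn (fun M : Mat2 n => Hm (Pmf M) j) (Uset n) := by
  refine ContinuousOn.mul ((contOn_Bmf j).mono Uset_subset_detSet)
    (contOn_inv ((contOn_Bmf (j + 1)).mono Uset_subset_detSet) ?_)
  intro M hM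
  exact isUnit_iff_ne_zero.mp (Uset_Bm_det hM (j + 1))

lemma contOn_Wmf (j : ℕ) : ContinuousOn (fun M : Mat2 n => Wmf j M) (Uset n) :=
  (contOn_Hmf j).sub continuousOn_const

lemma cont_qd : Continuous fun W : MatN n => qd W := by
  apply continuous_finset_sum
  intro a _
  apply continuous_finset_sum
  intro b _
  exact continuous_norm.comp (continuous_id.matrix_elem a b)

lemma cont_sd : Continuous fun W : MatN n => sd W := Real.continuous_sqrt.comp cont_qd

lemma cont_Rm (k : Fin n) : Continuous fun W : MatN n => Rm k W := by
  apply continuous_matrix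
  intro a b
  simp only [Rm, Matrix.sub_apply, Matrix.add_apply, Matrix.transpose_apply,
    Matrix.single, Matrix.of_apply]
  refine ((continuous_id.matrix_elem a b).add (continuous_id.matrix_elem b a)).sub ?_
  by_cases h : k = a ∧ k = b
  · simp only [if_pos h]; exact continuous_id.matrix_elem k k
  · simp only [if_neg h]; exact continuous_const

lemma cont_B1 (k : Fin n) : Continuous fun W : MatN n => B1 k W :=
  Continuous.smul (Complex.continuous_ofReal.comp cont_sd) continuous_const

lemma C1_entry_bound (k : Fin n) (W : MatN n) (a b : Fin n) :
    ‖C1 k W a b‖ ≤ 3 * Real.sqrt (qd W) := by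
  have hstd : ‖(Matrix.single k k (W k k) : MatN n) a b‖ ≤ qd W := by
    simp only [Matrix.single, Matrix.of_apply]
    split_ifs with h
    · exact entry_le_qd W k k
    · simp [qd_nonneg W]
  have hR : ‖Rm k W a b‖ ≤ 3 * qd W := by
    have h1 : Rm k W a b = W a b + W b a - (Matrix.single k k (W k k) : MatN n) a b := by
      simp [Rm]
    rw [h1]
    calc ‖W a b + W b a - (Matrix.single k k (W k k) : MatN n) a b‖
        ≤ ‖W a b + W b a‖ + ‖(Matrix.single k k (W k k) : MatN n) a b‖ :=
          norm_sub_le _ _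
      _ ≤ (‖W a b‖ + ‖W b a‖) + ‖(Matrix.single k k (W k k) : MatN n) a b‖ := by
          gcongr
          exact norm_add_le _ _
      _ ≤ (qd W + qd W) + qd W := by
          gcongr
          · exact entry_le_qd W a b
          · exact entry_le_qd W b a
      _ = 3 * qd W := by ring
  have hC1 : C1 k W a b = (((sd W)⁻¹ : ℝ) : ℂ) * Rm k W a b := by
    simp [C1, Matrix.smul_apply, smul_eq_mul]
  rw [hC1, norm_mul]
  have hnorm : ‖(((sd W)⁻¹ : ℝ) : ℂ)‖ = (sd W)⁻¹ := by
    rw [Complex.norm_real, Real.norm_eq_abs, abs_of_nonneg]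
    exact inv_nonneg.mpr (Real.sqrt_nonneg _)
  rw [hnorm]
  calc (sd W)⁻¹ * ‖Rm k W a b‖ ≤ (sd W)⁻¹ * (3 * qd W) := by
        apply mul_le_mul_of_nonneg_left hR
        exact inv_nonneg.mpr (Real.sqrt_nonneg _)
    _ = 3 * (qd W / Real.sqrt (qd W)) := by rw [sd]; ring
    _ = 3 * Real.sqrt (qd W) := by rw [Real.div_sqrt]

lemma cont_C1 (k : Fin n) : Continuous fun W : MatN n => C1 k W := by
  rw [continuous_iff_continuousAt]
  intro W₀
  rcases eq_or_ne (qd W₀) 0 with h0 | h0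
  · have hW0 : W₀ = 0 := eq_zero_of_qd_eq_zero h0
    apply continuousAt_pi.2
    intro a
    apply continuousAt_pi.2
    intro b
    have hval : C1 k W₀ a b = 0 := by rw [hW0, C1_zero]; rfl
    have htend : Filter.Tendsto (fun W : MatN n => C1 k W a b) (nhds W₀) (nhds 0) := by
      apply squeeze_zero_norm (fun W => C1_entry_bound k W a b)
      have hc : Filter.Tendsto (fun W : MatN n => 3 * Real.sqrt (qd W)) (nhds W₀)
          (nhds (3 * Real.sqrt (qd W₀))) :=
        ((continuous_const.mul (Real.continuous_sqrt.comp cont_qd)).tendsto W₀)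
      simpa [h0] using hc
    simpa [ContinuousAt, hval] using htend
  · have hs : sd W₀ ≠ 0 := by
      simp only [sd]
      exact Real.sqrt_ne_zero'.mpr (lt_of_le_of_ne (qd_nonneg W₀) (Ne.symm h0))
    refine ContinuousAt.smul (f := fun W : MatN n => (((sd W)⁻¹ : ℝ) : ℂ)) (g := fun W => Rm k W) ?_ ?_
    · exact Complex.continuous_ofReal.continuousAt.comp (cont_sd.continuousAt.inv₀ hs)
    · exact (cont_Rm k).continuousAt

lemma cont_UU : Continuous (UU : MatN n → Mat2 n) := by
  show Continuous fun B : MatN n => Matrix.fromBlocks 1 B 0 1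
  exact Continuous.matrix_fromBlocks continuous_const continuous_id continuous_const
    continuous_const

lemma cont_LL : Continuous (LL : MatN n → Mat2 n) := by
  show Continuous fun C : MatN n => Matrix.fromBlocks 1 0 C 1
  exact Continuous.matrix_fromBlocks continuous_const continuous_const continuous_id
    continuous_const

lemma contOn_fB1 (k : Fin n) :
    ContinuousOn (fun M : Mat2 n => B1 k (Wmf (k : ℕ) M)) (Uset n) :=
  Continuous.comp_continuousOn (cont_B1 k) (contOn_Wmf _)

lemma contOn_fC1 (k : Fin n) :
    ContinuousOn (fun M : Mat2 n => C1 k (Wmf (k : ℕ) M)) (Uset n) :=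
  Continuous.comp_continuousOn (cont_C1 k) (contOn_Wmf _)

lemma det_one_add_B1C1 {M : Mat2 n} (hM : M ∈ Uset n) (k : Fin n) :
    (1 + B1 k (Wmf (k : ℕ) M) * C1 k (Wmf (k : ℕ) M)).det ≠ 0 := by
  rw [B1_mul_C1 _ _ (Wmf_support hM k)]
  exact isUnit_iff_ne_zero.mp (Wmf_unit hM (k : ℕ))

lemma contOn_one_add_B1C1 (k : Fin n) :
    ContinuousOn (fun M : Mat2 n => 1 + B1 k (Wmf (k : ℕ) M) * C1 k (Wmf (k : ℕ) M))
      (Uset n) :=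
  continuousOn_const.add ((contOn_fB1 k).mul (contOn_fC1 k))

lemma contOn_fB2 (k : Fin n) :
    ContinuousOn (fun M : Mat2 n => B2 k (Wmf (k : ℕ) M)) (Uset n) := by
  have h1 := contOn_inv (contOn_one_add_B1C1 k) (fun M hM => det_one_add_B1C1 hM k)
  exact (h1.mul (contOn_fB1 k)).neg

lemma contOn_fC2 (k : Fin n) :
    ContinuousOn (fun M : Mat2 n => C2 k (Wmf (k : ℕ) M)) (Uset n) := by
  have h1 := Continuous.comp_continuousOn (continuous_id.matrix_transpose)
    (contOn_one_add_B1C1 k)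
  exact (h1.mul (contOn_fC1 k)).neg

lemma isOpen_Uset : IsOpen (Uset n) := by
  have hO1 : IsOpen (detSet n) := by
    have : detSet n = (fun M : Mat2 n => (M.toBlocks₂₂).det) ⁻¹' {x : ℂ | x ≠ 0} := rfl
    rw [this]
    exact IsOpen.preimage cont_toBlocks₂₂.matrix_det isOpen_ne
  have heq : Uset n = ⋂ j : Fin (n + 1),
      (detSet n ∩ (fun M : Mat2 n => (Bm (Pmf M) (j : ℕ)).det) ⁻¹' {x : ℂ | x ≠ 0}) := by
    ext M
    simp only [Uset, Set.mem_iInter, Set.mem_inter_iff, Set.mem_setOf_eq, Set.mem_preimage,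
      detSet]
    constructor
    · rintro ⟨h1, h2⟩ j; exact ⟨h1, h2 j⟩
    · intro h
      exact ⟨(h 0).1, fun j => (h j).2⟩
  rw [heq]
  apply isOpen_iInter_of_finite
  intro j
  exact ContinuousOn.isOpen_inter_preimage
    (Continuous.comp_continuousOn (continuous_id.matrix_det) (contOn_Bmf (j : ℕ)))
    hO1 isOpen_ne

/-! ### Glue -/

def GoodFam (V : Set (Mat2 n)) (N : ℕ) (E : Fin N → Mat2 n → Mat2 n)
    (T : Mat2 n → Mat2 n) : Prop :=
  (∀ i, ContinuousOn (E i) V) ∧ (∀ i, E i 1 = 1) ∧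
    ∀ M ∈ V, (∀ i, IsElemSymp (E i M)) ∧ T M = (List.ofFn fun i => E i M).prod

lemma GoodFam.congr {V : Set (Mat2 n)} {N : ℕ} {E : Fin N → Mat2 n → Mat2 n}
    {T T' : Mat2 n → Mat2 n} (h : GoodFam V N E T) (hT : ∀ M ∈ V, T M = T' M) :
    GoodFam V N E T' := by
  refine ⟨h.1, h.2.1, fun M hM => ⟨(h.2.2 M hM).1, ?_⟩⟩
  rw [← hT M hM]
  exact (h.2.2 M hM).2

lemma GoodFam.append {V : Set (Mat2 n)} {N₁ N₂ : ℕ} {E₁ : Fin N₁ → Mat2 n → Mat2 n}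
    {E₂ : Fin N₂ → Mat2 n → Mat2 n} {T₁ T₂ : Mat2 n → Mat2 n}
    (h₁ : GoodFam V N₁ E₁ T₁) (h₂ : GoodFam V N₂ E₂ T₂) :
    GoodFam V (N₁ + N₂) (Fin.append E₁ E₂) fun M => T₁ M * T₂ M := by
  have happ : ∀ M, (fun i : Fin (N₁ + N₂) => Fin.append E₁ E₂ i M)
      = Fin.append (fun i => E₁ i M) (fun i => E₂ i M) := by
    intro M
    funext i
    refine Fin.addCases (fun j => ?_) (fun j => ?_) i <;>
      simp [Fin.append_left, Fin.append_right]
  refine ⟨?_, ?_, ?_⟩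
  · intro i
    refine Fin.addCases (fun j => ?_) (fun j => ?_) i
    · rw [Fin.append_left]; exact h₁.1 j
    · rw [Fin.append_right]; exact h₂.1 j
  · intro i
    refine Fin.addCases (fun j => ?_) (fun j => ?_) i
    · rw [Fin.append_left]; exact h₁.2.1 j
    · rw [Fin.append_right]; exact h₂.2.1 j
  · intro M hM
    constructor
    · intro i
      refine Fin.addCases (fun j => ?_) (fun j => ?_) i
      · rw [Fin.append_left]; exact (h₁.2.2 M hM).1 j
      · rw [Fin.append_right]; exact (h₂.2.2 M hM).1 j
    · rw [happ M, List.ofFn_fin_append, List.prod_append, ← (h₁.2.2 M hM).2,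
        ← (h₂.2.2 M hM).2]

lemma goodFam_single {V : Set (Mat2 n)} (g : Mat2 n → Mat2 n)
    (hc : ContinuousOn g V) (h1 : g 1 = 1) (he : ∀ M ∈ V, IsElemSymp (g M)) :
    GoodFam V 1 (fun _ => g) g := by
  refine ⟨fun _ => hc, fun _ => h1, fun M hM => ⟨fun _ => he M hM, ?_⟩⟩
  simp

lemma goodFam_fold {V : Set (Mat2 n)} :
    ∀ (m : ℕ) (G : Fin m → Fin 4 → Mat2 n → Mat2 n) (T : Fin m → Mat2 n → Mat2 n),
      (∀ j, GoodFam V 4 (G j) (T j)) →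
      ∃ N E, GoodFam V N E fun M => (List.ofFn fun j => T j M).prod
  | 0, G, T, h => ⟨0, Fin.elim0, fun i => i.elim0, fun i => i.elim0,
      fun M hM => ⟨fun i => i.elim0, by simp⟩⟩
  | (m + 1), G, T, h => by
      obtain ⟨N', E', hE'⟩ := goodFam_fold m (fun j => G j.succ) (fun j => T j.succ)
        fun j => h j.succ
      refine ⟨4 + N', Fin.append (G 0) E', ?_⟩
      refine ((h 0).append hE').congr ?_
      intro M _
      rw [List.ofFn_succ, List.prod_cons]

lemma DD_list_prod : ∀ l : List (MatN n), (l.map DD).prod = DD l.prod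
  | [] => by simp [DD_one]
  | (a :: l) => by
      rw [List.map_cons, List.prod_cons, List.prod_cons, DD_list_prod l, DD_mul]

end SpFact

namespace SpFact

variable {n : ℕ}

lemma goodFam_quad (k : Fin n) :
    GoodFam (Vset n) 4
      ![fun M => UU (B1 k (Wmf (k : ℕ) M)), fun M => LL (C1 k (Wmf (k : ℕ) M)),
        fun M => UU (B2 k (Wmf (k : ℕ) M)), fun M => LL (C2 k (Wmf (k : ℕ) M))]
      (fun M => DD (Hm (Pmf M) (k : ℕ))) := by
  have hsub : Vset n ⊆ Uset n := Set.inter_subset_left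
  refine ⟨?_, ?_, ?_⟩
  · intro i
    fin_cases i
    · exact (Continuous.comp_continuousOn cont_UU (contOn_fB1 k)).mono hsub
    · exact (Continuous.comp_continuousOn cont_LL (contOn_fC1 k)).mono hsub
    · exact (Continuous.comp_continuousOn cont_UU (contOn_fB2 k)).mono hsub
    · exact (Continuous.comp_continuousOn cont_LL (contOn_fC2 k)).mono hsub
  · intro i
    fin_cases i
    · show UU (B1 k (Wmf (k : ℕ) 1)) = 1
      rw [Wmf_one, B1_zero, UU_zero]
    · show LL (C1 k (Wmf (k : ℕ) 1)) = 1
      rw [Wmf_one, C1_zero, LL_zero]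
    · show UU (B2 k (Wmf (k : ℕ) 1)) = 1
      rw [Wmf_one, B2_zero, UU_zero]
    · show LL (C2 k (Wmf (k : ℕ) 1)) = 1
      rw [Wmf_one, C2_zero, LL_zero]
  · intro M hM
    have hU : M ∈ Uset n := hsub hM
    have hsupp := Wmf_support hU k
    have hu := Wmf_unit hU (k : ℕ)
    constructor
    · intro i
      fin_cases i
      · exact isElemSymp_UU (B1_transpose k _)
      · exact isElemSymp_LL (C1_transpose k _)
      · exact isElemSymp_UU (B2_transpose k _ hsupp hu)
      · exact isElemSymp_LL (C2_transpose k _)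
    · have hq := quad_eq k (Wmf (k : ℕ) M) hsupp hu
      rw [one_add_Wmf] at hq
      refine Eq.trans hq.symm ?_
      simp only [List.ofFn_succ, List.ofFn_zero, List.prod_cons, List.prod_nil,
        Matrix.cons_val_zero, Matrix.cons_val_succ, mul_one, Fin.succ_zero_eq_one]
      noncomm_ring

lemma goodFam_g1 :
    GoodFam (Vset n) 1 (fun _ M => UU (M.toBlocks₁₂ * (M.toBlocks₂₂)⁻¹))
      (fun M => UU (M.toBlocks₁₂ * (M.toBlocks₂₂)⁻¹)) := by
  apply goodFam_single
  · refine (Continuous.comp_continuousOn cont_UU ?_).mono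
      (Set.inter_subset_left.trans Uset_subset_detSet)
    exact (cont_toBlocks₁₂.continuousOn).mul (contOn_inv cont_toBlocks₂₂.continuousOn
      fun M hM => hM)
  · rw [toBlocks₁₂_one, Matrix.zero_mul, UU_zero]
  · intro M hM
    exact isElemSymp_UU (Xm_transpose M hM.2 (isUnit_iff_ne_zero.mpr hM.1.1))

lemma goodFam_g2 :
    GoodFam (Vset n) 1 (fun _ M => LL (M.toBlocks₂₁ * (M.toBlocks₂₂)ᵀ))
      (fun M => LL (M.toBlocks₂₁ * (M.toBlocks₂₂)ᵀ)) := by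
  apply goodFam_single
  · exact (cont_LL.comp (cont_toBlocks₂₁.mul cont_toBlocks₂₂.matrix_transpose)).continuousOn
  · rw [toBlocks₂₁_one, Matrix.zero_mul, LL_zero]
  · intro M hM
    exact isElemSymp_LL (Ym_transpose M hM.2)

end SpFact

open SpFact in
/-- There is a relatively open neighbourhood `V` of the identity in `Sp_{2n}(ℂ)` and
continuous maps `E₁, …, E_N` on `V` into elementary symplectic matrices with `Eᵢ(I) = I`
and `M = E₁(M) ⋯ E_N(M)` for all `M ∈ V`. -/
theorem stmt10 (n : ℕ) :
    ∃ V : Set (Matrix (Idx n) (Idx n) ℂ),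
      (1 : Matrix (Idx n) (Idx n) ℂ) ∈ V ∧
      (∃ U : Set (Matrix (Idx n) (Idx n) ℂ), IsOpen U ∧
        V = U ∩ {M : Matrix (Idx n) (Idx n) ℂ | IsSymplectic M}) ∧
      ∃ (N : ℕ) (E : Fin N → Matrix (Idx n) (Idx n) ℂ → Matrix (Idx n) (Idx n) ℂ),
        (∀ i, ContinuousOn (E i) V) ∧
        (∀ i, E i 1 = 1) ∧
        ∀ M ∈ V, (∀ i, IsElemSymp (E i M)) ∧
          M = (List.ofFn fun i => E i M).prod := by
  classical
  obtain ⟨N₃, E₃, h₃⟩ := goodFam_fold n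
    (fun k => ![fun M => UU (B1 k (Wmf (k : ℕ) M)), fun M => LL (C1 k (Wmf (k : ℕ) M)),
      fun M => UU (B2 k (Wmf (k : ℕ) M)), fun M => LL (C2 k (Wmf (k : ℕ) M))])
    (fun k M => DD (Hm (Pmf M) (k : ℕ)))
    goodFam_quad
  have h₃' : GoodFam (Vset n) N₃ E₃ fun M => DD (Pmf M) := by
    refine h₃.congr ?_
    intro M hM
    have hmap : (List.ofFn fun j : Fin n => DD (Hm (Pmf M) (j : ℕ)))
        = (List.ofFn fun j : Fin n => Hm (Pmf M) (j : ℕ)).map DD := by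
      rw [List.map_ofFn]; rfl
    rw [hmap, DD_list_prod, Hm_prod_full _ (Uset_Bm_det hM.1)]
  have htot := goodFam_g1.append (goodFam_g2.append h₃')
  have hfinal : GoodFam (Vset n) (1 + (1 + N₃))
      (Fin.append (fun _ M => UU (toBlocks₁₂ M * (toBlocks₂₂ M)⁻¹))
        (Fin.append (fun _ M => LL (toBlocks₂₁ M * (toBlocks₂₂ M)ᵀ)) E₃))
      fun M => M := by
    refine htot.congr ?_
    intro M hM
    exact (stepA M hM.2 (isUnit_iff_ne_zero.mpr hM.1.1)).symm
  exact ⟨Vset n, one_mem_Vset, ⟨Uset n, isOpen_Uset, rfl⟩, 1 + (1 + N₃), _,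
    hfinal.1, hfinal.2.1, fun M hM => ⟨(hfinal.2.2 M hM).1, (hfinal.2.2 M hM).2⟩⟩
end

section
/- Every symplectic matrix M ∈ Sp_{2n}(ℂ) whose entries are close enough to the identity matrix (in particular so that all pivots arising in Gaussian elimination are nonzero) can be written as a product of at most N(n) elementary symplectic matrices, where N(n) depends only on n. -/
open Matrix

section Aux

variable {n : ℕ}

lemma vmv_mul (a b c d : Fin n → ℂ) :
    vecMulVec a b * vecMulVec c d = (b ⬝ᵥ c) • vecMulVec a d := by
  ext i j
  simp only [Matrix.mul_apply, Matrix.vecMulVec_apply, Matrix.smul_apply, dotProduct,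
    Finset.sum_mul, smul_eq_mul]
  exact Finset.sum_congr rfl fun k _ => by ring

lemma vmv_mul_mat (c : Fin n → ℂ) (k : Fin n) (A : Matrix (Fin n) (Fin n) ℂ) :
    vecMulVec c (Pi.single k 1) * A = vecMulVec c (A k) := by
  ext i j
  simp only [Matrix.mul_apply, Matrix.vecMulVec_apply, Pi.single_apply, mul_ite, ite_mul,
    one_mul, mul_one, mul_zero, zero_mul]
  simp

lemma vmv_transpose (a b : Fin n → ℂ) : (vecMulVec a b)ᵀ = vecMulVec b a := by
  ext i j; simp [Matrix.vecMulVec_apply, mul_comm]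

lemma single_fact (k : Fin n) (v : Fin n → ℂ) (hv : v k = 0) :
    Matrix.fromBlocks (1 + vecMulVec v (Pi.single k 1)) 0 0 (1 - vecMulVec (Pi.single k 1) v) =
      Matrix.fromBlocks 1 (vecMulVec v (Pi.single k 1) + vecMulVec (Pi.single k 1) v) 0 1 *
      Matrix.fromBlocks 1 0 (vecMulVec (Pi.single k 1) (Pi.single k 1)) 1 *
      Matrix.fromBlocks 1 (vecMulVec v v - vecMulVec v (Pi.single k 1) -
        vecMulVec (Pi.single k 1) v) 0 1 *
      Matrix.fromBlocks 1 0 (-(vecMulVec (Pi.single k 1) (Pi.single k 1))) 1 := by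
  set e := (Pi.single k 1 : Fin n → ℂ) with he
  have hev : e ⬝ᵥ v = 0 := by simp [he, single_dotProduct, hv]
  have hve : v ⬝ᵥ e = 0 := by simp [he, dotProduct_single, hv]
  have hee : e ⬝ᵥ e = (1:ℂ) := by simp [he, dotProduct_single]
  simp only [Matrix.fromBlocks_multiply, Matrix.mul_one, Matrix.one_mul, Matrix.mul_zero,
    Matrix.zero_mul, add_zero, zero_add, mul_one, one_mul]
  simp only [mul_add, add_mul, sub_mul, mul_sub, vmv_mul, hev, hve, hee, one_smul, zero_smul,
    smul_zero, mul_one, one_mul, neg_mul, mul_neg]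
  noncomm_ring

lemma diag_fact (d : Fin n → ℂ) (hd : ∀ j, d j ≠ 0) :
    Matrix.fromBlocks (diagonal d) 0 0 (diagonal fun j => (d j)⁻¹) =
      Matrix.fromBlocks 1 1 0 1 * Matrix.fromBlocks 1 0 (diagonal d - 1) 1 *
      Matrix.fromBlocks 1 (-(diagonal fun j => (d j)⁻¹)) 0 1 *
      Matrix.fromBlocks 1 0 (diagonal d - diagonal d * diagonal d) 1 := by
  have h1 : diagonal d * (diagonal fun j => (d j)⁻¹) = 1 := by
    rw [diagonal_mul_diagonal]
    convert diagonal_one using 2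
    exact funext fun i => mul_inv_cancel₀ (hd i)
  have h2 : (diagonal fun j => (d j)⁻¹) * diagonal d = 1 := by
    rw [diagonal_mul_diagonal]
    convert diagonal_one using 2
    exact funext fun i => inv_mul_cancel₀ (hd i)
  set G := diagonal d with hG
  set G' := (diagonal fun j => (d j)⁻¹ : Matrix (Fin n) (Fin n) ℂ) with hG'
  simp only [Matrix.fromBlocks_multiply, Matrix.mul_one, Matrix.one_mul, Matrix.mul_zero,
    Matrix.zero_mul, add_zero, zero_add]
  have e0 : (1 : Matrix (Fin n) (Fin n) ℂ) + (G - 1) = G := by abel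
  have e1 : (1 + (G - 1)) * -G' + 1 = (0 : Matrix (Fin n) (Fin n) ℂ) := by
    rw [e0, Matrix.mul_neg, h1]; abel
  have e2 : (G - 1) * -G' + 1 = G' := by
    rw [Matrix.sub_mul, Matrix.mul_neg, Matrix.one_mul, h1]; abel
  have e3 : G' * (G - G * G) = 1 - G := by
    rw [Matrix.mul_sub, h2, ← Matrix.mul_assoc, h2, Matrix.one_mul]
  have e4 : G - 1 + (1 - G) = (0 : Matrix (Fin n) (Fin n) ℂ) := by abel
  rw [e1, e2, e3, Matrix.zero_mul, add_zero, e0, e4]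

lemma Dfull (cs : List (Matrix (Fin n) (Fin n) ℂ))
    (hcs : ∀ E ∈ cs, ∃ (k : Fin n) (v : Fin n → ℂ), v k = 0 ∧
      E = 1 + vecMulVec v (Pi.single k 1))
    (d : Fin n → ℂ) (hd : ∀ j, d j ≠ 0) :
    ∃ (L : List (Matrix (Idx n) (Idx n) ℂ)) (E' : Matrix (Fin n) (Fin n) ℂ),
      L.length = 4 * cs.length + 4 ∧ (∀ X ∈ L, IsElemSymp X) ∧
      Matrix.fromBlocks (cs.prod * diagonal d) 0 0 E' = L.prod ∧
      E' * (cs.prod * diagonal d)ᵀ = 1 ∧ (cs.prod * diagonal d)ᵀ * E' = 1 := by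
  induction cs with
  | nil =>
      refine ⟨[Matrix.fromBlocks 1 1 0 1, Matrix.fromBlocks 1 0 (diagonal d - 1) 1,
        Matrix.fromBlocks 1 (-(diagonal fun j => (d j)⁻¹)) 0 1,
        Matrix.fromBlocks 1 0 (diagonal d - diagonal d * diagonal d) 1],
        diagonal (fun j => (d j)⁻¹), rfl, ?_, ?_, ?_, ?_⟩
      · intro X hX
        simp only [List.mem_cons, List.not_mem_nil, or_false] at hX
        rcases hX with h | h | h | h
        · exact ⟨1, Matrix.transpose_one, Or.inl h⟩
        · exact ⟨diagonal d - 1, by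
            rw [Matrix.transpose_sub, Matrix.diagonal_transpose, Matrix.transpose_one], Or.inr h⟩
        · exact ⟨-(diagonal fun j => (d j)⁻¹), by
            rw [Matrix.transpose_neg, Matrix.diagonal_transpose], Or.inl h⟩
        · exact ⟨diagonal d - diagonal d * diagonal d, by
            rw [Matrix.transpose_sub, Matrix.transpose_mul, Matrix.diagonal_transpose], Or.inr h⟩
      · simp only [List.prod_cons, List.prod_nil, Matrix.mul_one, List.prod_nil,
          Matrix.one_mul, ← Matrix.mul_assoc]
        exact diag_fact d hd
      · rw [List.prod_nil, Matrix.one_mul, Matrix.diagonal_transpose, diagonal_mul_diagonal]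
        convert diagonal_one using 2
        exact funext fun i => inv_mul_cancel₀ (hd i)
      · rw [List.prod_nil, Matrix.one_mul, Matrix.diagonal_transpose, diagonal_mul_diagonal]
        convert diagonal_one using 2
        exact funext fun i => mul_inv_cancel₀ (hd i)
  | cons F t ihc =>
      obtain ⟨L', E', hlen', helem', hprod', hinv1', hinv2'⟩ :=
        ihc (fun E hE => hcs E (List.mem_cons_of_mem _ hE))
      obtain ⟨k, v, hv, hF⟩ := hcs F List.mem_cons_self
      set e := (Pi.single k 1 : Fin n → ℂ) with he
      set F'' := (1 - vecMulVec e v : Matrix (Fin n) (Fin n) ℂ) with hF''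
      have hXX : vecMulVec e v * vecMulVec e v = 0 := by
        rw [vmv_mul]
        have : v ⬝ᵥ e = 0 := by simp [he, dotProduct_single, hv]
        rw [this, zero_smul]
      have hFt : Fᵀ = 1 + vecMulVec e v := by
        rw [hF, Matrix.transpose_add, Matrix.transpose_one, vmv_transpose]
      have hinvA : F'' * Fᵀ = 1 := by
        rw [hFt, hF'']
        simp only [Matrix.mul_add, Matrix.sub_mul, Matrix.one_mul, Matrix.mul_one, hXX]
        abel
      have hinvB : Fᵀ * F'' = 1 := by
        rw [hFt, hF'']
        simp only [Matrix.mul_sub, Matrix.add_mul, Matrix.one_mul, Matrix.mul_one, hXX]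
        abel
      refine ⟨[Matrix.fromBlocks 1 (vecMulVec v e + vecMulVec e v) 0 1,
        Matrix.fromBlocks 1 0 (vecMulVec e e) 1,
        Matrix.fromBlocks 1 (vecMulVec v v - vecMulVec v e - vecMulVec e v) 0 1,
        Matrix.fromBlocks 1 0 (-(vecMulVec e e)) 1] ++ L', F'' * E', ?_, ?_, ?_, ?_, ?_⟩
      · simp [hlen', List.length_cons]; ring
      · intro X hX
        rcases List.mem_append.mp hX with h | h
        · simp only [List.mem_cons, List.not_mem_nil, or_false] at h
          rcases h with h | h | h | h
          · exact ⟨vecMulVec v e + vecMulVec e v, by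
              rw [Matrix.transpose_add, vmv_transpose, vmv_transpose, add_comm], Or.inl h⟩
          · exact ⟨vecMulVec e e, by rw [vmv_transpose], Or.inr h⟩
          · exact ⟨vecMulVec v v - vecMulVec v e - vecMulVec e v, by
              rw [Matrix.transpose_sub, Matrix.transpose_sub, vmv_transpose, vmv_transpose,
                vmv_transpose, sub_sub, sub_sub, add_comm], Or.inl h⟩
          · exact ⟨-(vecMulVec e e), by rw [Matrix.transpose_neg, vmv_transpose], Or.inr h⟩
        · exact helem' X h
      · have hfb : Matrix.fromBlocks F 0 0 F'' *
            Matrix.fromBlocks (t.prod * diagonal d) 0 0 E' =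
            Matrix.fromBlocks (F * (t.prod * diagonal d)) 0 0 (F'' * E') := by
          simp [Matrix.fromBlocks_multiply]
        have hsf : Matrix.fromBlocks F 0 0 F'' =
            Matrix.fromBlocks 1 (vecMulVec v e + vecMulVec e v) 0 1 *
            (Matrix.fromBlocks 1 0 (vecMulVec e e) 1 *
            (Matrix.fromBlocks 1 (vecMulVec v v - vecMulVec v e - vecMulVec e v) 0 1 *
            Matrix.fromBlocks 1 0 (-(vecMulVec e e)) 1)) := by
          rw [hF, hF'', he]
          rw [single_fact k v hv]
          simp only [Matrix.mul_assoc]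
        simp only [List.prod_cons, List.prod_append, List.prod_nil, Matrix.mul_one]
        rw [Matrix.mul_assoc F, ← hfb, hprod', hsf]
      · rw [List.prod_cons, Matrix.mul_assoc F, Matrix.transpose_mul]
        calc F'' * E' * ((t.prod * diagonal d)ᵀ * Fᵀ)
            = F'' * (E' * (t.prod * diagonal d)ᵀ) * Fᵀ := by
              simp only [Matrix.mul_assoc]
          _ = 1 := by rw [hinv1', Matrix.mul_one, hinvA]
      · rw [List.prod_cons, Matrix.mul_assoc F, Matrix.transpose_mul]
        calc (t.prod * diagonal d)ᵀ * Fᵀ * (F'' * E')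
            = (t.prod * diagonal d)ᵀ * (Fᵀ * F'') * E' := by
              simp only [Matrix.mul_assoc]
          _ = 1 := by rw [hinvB, Matrix.mul_one, hinv2']

end Aux

lemma elim_lemma (l : List (Fin n)) : ∀ (δ : ℝ) (A : Matrix (Fin n) (Fin n) ℂ), 0 ≤ δ →
    4 ^ l.length * δ ≤ 1/2 →
    (∀ i j, ‖A i j - (1 : Matrix (Fin n) (Fin n) ℂ) i j‖ ≤ δ) →
    ∃ (cs : List (Matrix (Fin n) (Fin n) ℂ)) (A' : Matrix (Fin n) (Fin n) ℂ),
      cs.length = l.length ∧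
      (∀ E ∈ cs, ∃ (k : Fin n) (v : Fin n → ℂ), v k = 0 ∧ E = 1 + vecMulVec v (Pi.single k 1)) ∧
      A = cs.prod * A' ∧
      (∀ i j, ‖A' i j - (1 : Matrix (Fin n) (Fin n) ℂ) i j‖ ≤ 4 ^ l.length * δ) ∧
      (∀ j, (j ∈ l ∨ ∀ i, i ≠ j → A i j = 0) → ∀ i, i ≠ j → A' i j = 0) := by
  induction l with
  | nil =>
      intro δ A hδ0 hδ hA
      refine ⟨[], A, rfl, by simp, by simp, by simpa using hA, fun j hj i hij => ?_⟩
      rcases hj with h | h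
      · simp at h
      · exact h i hij
  | cons k t ih =>
      intro δ A hδ0 hδ hA
      have hlen : ((k :: t : List (Fin n)).length : ℕ) = t.length + 1 := rfl
      have hpow : (4 : ℝ) ^ (k :: t : List (Fin n)).length = 4 ^ t.length * 4 := by
        rw [hlen, pow_succ]
      have h4t : (1:ℝ) ≤ 4 ^ t.length := one_le_pow₀ (by norm_num)
      have hδ8 : δ ≤ 1/8 := by
        rw [hpow] at hδ; nlinarith
      set p := A k k with hp
      have hp1 : ‖p - 1‖ ≤ δ := by
        have := hA k k; rwa [Matrix.one_apply_eq] at this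
      have hpn : (1:ℝ)/2 ≤ ‖p‖ := by
        have h := norm_sub_norm_le (1:ℂ) p
        rw [norm_one, norm_sub_rev] at h
        linarith
      have hp0 : p ≠ 0 := by
        intro h; rw [h, norm_zero] at hpn; linarith
      set c : Fin n → ℂ := fun i => if i = k then 0 else A i k / p with hc
      have hck : c k = 0 := by simp [hc]
      have hAd : ∀ i j, ‖A i j‖ ≤ 1 + δ := by
        intro i j
        have h1 := hA i j
        have h2 : ‖(1 : Matrix (Fin n) (Fin n) ℂ) i j‖ ≤ 1 := by
          by_cases h : i = j <;> simp [Matrix.one_apply, h]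
        have he : A i j = (A i j - (1 : Matrix (Fin n) (Fin n) ℂ) i j) +
            (1 : Matrix (Fin n) (Fin n) ℂ) i j := by ring
        rw [he]
        exact le_trans (norm_add_le _ _) (by linarith)
      have hcb : ∀ i, ‖c i‖ ≤ 2 * δ := by
        intro i
        by_cases h : i = k
        · simp [hc, h]; linarith
        · have hik : ‖A i k‖ ≤ δ := by
            have := hA i k
            rwa [Matrix.one_apply_ne h, sub_zero] at this
          rw [hc]
          simp only [h, if_false, norm_div]
          calc ‖A i k‖ / ‖p‖ ≤ δ / (1/2) := by
                apply div_le_div₀ hδ0 hik (by norm_num) hpn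
            _ = 2 * δ := by ring
      set W := vecMulVec c (Pi.single k 1) with hW
      set A₁ := A - vecMulVec c (A k) with hA₁
      have hW2 : W * W = 0 := by
        rw [hW, vmv_mul]
        have : (Pi.single k 1 : Fin n → ℂ) ⬝ᵥ c = 0 := by
          rw [single_dotProduct, hck, mul_zero]
        rw [this, zero_smul]
      have hWA : W * A = vecMulVec c (A k) := vmv_mul_mat c k A
      have hfac : A = (1 + W) * A₁ := by
        rw [hA₁, ← hWA]
        simp only [mul_sub, add_mul, Matrix.one_mul, ← Matrix.mul_assoc, hW2, Matrix.zero_mul]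
        abel
      have hA₁app : ∀ i j, A₁ i j = A i j - c i * A k j := by
        intro i j; simp [hA₁, Matrix.vecMulVec_apply]
      have hA₁b : ∀ i j, ‖A₁ i j - (1 : Matrix (Fin n) (Fin n) ℂ) i j‖ ≤ 4 * δ := by
        intro i j
        rw [hA₁app]
        by_cases h : i = k
        · rw [h, hck]
          simp only [zero_mul, sub_zero]
          linarith [hA k j]
        · have h1 := hA i j
          have h2 := hcb i
          have h3 := hAd k j
          calc ‖A i j - c i * A k j - (1 : Matrix (Fin n) (Fin n) ℂ) i j‖
              = ‖(A i j - (1 : Matrix (Fin n) (Fin n) ℂ) i j) - c i * A k j‖ := by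
                congr 1; ring
            _ ≤ ‖A i j - (1 : Matrix (Fin n) (Fin n) ℂ) i j‖ + ‖c i * A k j‖ := norm_sub_le _ _
            _ = ‖A i j - (1 : Matrix (Fin n) (Fin n) ℂ) i j‖ + ‖c i‖ * ‖A k j‖ := by
                rw [norm_mul]
            _ ≤ δ + (2*δ) * (1 + δ) := by
                have := norm_nonneg (A k j)
                have := norm_nonneg (c i)
                gcongr
            _ ≤ 4 * δ := by nlinarith
      have hA1k : ∀ i, i ≠ k → A₁ i k = 0 := by
        intro i hik
        rw [hA₁app, hc]
        simp only [hik, if_false]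
        rw [← hp, div_mul_cancel₀ _ hp0, sub_self]
      have hih1 : (0:ℝ) ≤ 4 * δ := by linarith
      have hih2 : 4 ^ t.length * (4 * δ) ≤ 1/2 := by
        rw [hpow] at hδ; nlinarith
      obtain ⟨cs', A', hlen', hshape', hprod', hbound', hclean'⟩ :=
        ih (4*δ) A₁ hih1 hih2 hA₁b
      refine ⟨(1 + W) :: cs', A', by simp [hlen'], ?_, ?_, ?_, ?_⟩
      · intro E hE
        rcases List.mem_cons.mp hE with h | h
        · exact ⟨k, c, hck, by rw [h, hW]⟩
        · exact hshape' E h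
      · rw [List.prod_cons, Matrix.mul_assoc, ← hprod']
        exact hfac
      · intro i j
        have hb := hbound' i j
        rw [hpow]
        calc ‖A' i j - (1 : Matrix (Fin n) (Fin n) ℂ) i j‖ ≤ 4 ^ t.length * (4*δ) := hb
          _ = 4 ^ t.length * 4 * δ := by ring
      · intro j hj i hij
        apply hclean' j _ i hij
        rcases hj with hj | hj
        · rcases List.mem_cons.mp hj with h | h
          · right
            intro i' hi'
            rw [h] at hi' ⊢
            exact hA1k i' hi'
          · left; exact h
        · by_cases hjk : j = k
          · right
            intro i' hi'
            rw [hjk] at hi' ⊢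
            exact hA1k i' hi'
          · right
            intro i' hi'
            rw [hA₁app, hj k (fun h => hjk h.symm), mul_zero, sub_zero]
            exact hj i' hi'


/-- Every complex symplectic matrix whose entries are close enough to those of the identity
is a product of at most `N(n)` elementary symplectic matrices. -/
theorem stmt11 (n : ℕ) :
    ∃ (N : ℕ) (ε : ℝ), 0 < ε ∧
      ∀ M : Matrix (Idx n) (Idx n) ℂ, IsSymplectic M →
        (∀ a b : Idx n, ‖M a b - (1 : Matrix (Idx n) (Idx n) ℂ) a b‖ < ε) →
        ∃ L : List (Matrix (Idx n) (Idx n) ℂ),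
          L.length ≤ N ∧ (∀ E ∈ L, IsElemSymp E) ∧ M = L.prod := by
  refine ⟨4*n + 10, 1 / (2 * 4^n), by positivity, ?_⟩
  intro M hsymp hnear
  set ε : ℝ := 1 / (2 * 4^n) with hε
  set A := M.toBlocks₁₁ with hAdef
  set B := M.toBlocks₁₂ with hBdef
  set C := M.toBlocks₂₁ with hCdef
  set D := M.toBlocks₂₂ with hDdef
  have hA : ∀ i j, ‖A i j - (1 : Matrix (Fin n) (Fin n) ℂ) i j‖ ≤ ε := by
    intro i j
    have h := (hnear (Sum.inl i) (Sum.inl j)).le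
    have hone : (1 : Matrix (Idx n) (Idx n) ℂ) (Sum.inl i) (Sum.inl j) =
        (1 : Matrix (Fin n) (Fin n) ℂ) i j := by
      by_cases hij : i = j <;> simp [Matrix.one_apply, hij]
    rw [hone] at h
    exact h
  have h4n : (0:ℝ) < 4^n := by positivity
  have hεpow : 4 ^ (List.finRange n).length * ε ≤ 1/2 := by
    rw [List.length_finRange, hε]
    rw [mul_one_div]
    rw [div_le_div_iff₀ (by positivity) (by norm_num)]
    ring_nf
    nlinarith
  obtain ⟨cs, A', hlen, hshape, hprod, hbound', hclean⟩ :=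
    elim_lemma (List.finRange n) ε A (by positivity) hεpow hA
  have hb12 : ∀ i j, ‖A' i j - (1 : Matrix (Fin n) (Fin n) ℂ) i j‖ ≤ 1/2 :=
    fun i j => le_trans (hbound' i j) hεpow
  set d : Fin n → ℂ := fun j => A' j j with hd
  have hdne : ∀ j, d j ≠ 0 := by
    intro j h
    have hb := hb12 j j
    rw [Matrix.one_apply_eq] at hb
    have : A' j j = 0 := h
    rw [this] at hb
    simp at hb
    linarith
  have hdiag : A' = diagonal d := by
    ext i j
    by_cases hij : i = j
    · subst hij; rw [Matrix.diagonal_apply_eq]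
    · rw [Matrix.diagonal_apply_ne _ hij]
      exact hclean j (Or.inl (List.mem_finRange j)) i hij
  have hAfac : A = cs.prod * diagonal d := by rw [← hdiag]; exact hprod
  obtain ⟨LD, E', hLDlen, hLDelem, hLDprod, hE1, hE2⟩ := Dfull cs hshape d hdne
  rw [← hAfac] at hLDprod hE1 hE2
  set Ainv := E'ᵀ with hAinvdef
  have hAi1 : A * Ainv = 1 := by
    have h := congrArg Matrix.transpose hE1
    rwa [Matrix.transpose_mul, Matrix.transpose_transpose, Matrix.transpose_one] at h
  have hAi2 : Ainv * A = 1 := by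
    have h := congrArg Matrix.transpose hE2
    rwa [Matrix.transpose_mul, Matrix.transpose_transpose, Matrix.transpose_one] at h
  -- symplectic block identities
  have hM : M = Matrix.fromBlocks A B C D := (Matrix.fromBlocks_toBlocks M).symm
  have hJb : Jmat ℂ n = Matrix.fromBlocks (0 : Matrix (Fin n) (Fin n) ℂ) 1 (-1) 0 := rfl
  have hJJ : Jmat ℂ n * Jmat ℂ n = -1 := by
    rw [hJb, Matrix.fromBlocks_multiply]
    have : (-1 : Matrix (Idx n) (Idx n) ℂ) = Matrix.fromBlocks (-1) (-0) (-0) (-1) := by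
      rw [← Matrix.fromBlocks_neg, Matrix.fromBlocks_one]
    rw [this, Matrix.fromBlocks_inj]
    refine ⟨by noncomm_ring, by noncomm_ring, by noncomm_ring, by noncomm_ring⟩
  have hsymp' : Mᵀ * Jmat ℂ n * M = Jmat ℂ n := hsymp
  have hleft : (-(Jmat ℂ n) * Mᵀ * Jmat ℂ n) * M = 1 := by
    calc (-(Jmat ℂ n) * Mᵀ * Jmat ℂ n) * M
        = -(Jmat ℂ n) * (Mᵀ * Jmat ℂ n * M) := by
          simp only [Matrix.mul_assoc, Matrix.neg_mul]
      _ = -(Jmat ℂ n) * Jmat ℂ n := by rw [hsymp']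
      _ = 1 := by rw [Matrix.neg_mul, hJJ, neg_neg]
  have hright : M * (-(Jmat ℂ n) * Mᵀ * Jmat ℂ n) = 1 := mul_eq_one_comm.mp hleft
  have hMJ : M * Jmat ℂ n * Mᵀ = Jmat ℂ n := by
    have h2 : M * (-(Jmat ℂ n) * Mᵀ * Jmat ℂ n) * -(Jmat ℂ n) = -(Jmat ℂ n) := by
      rw [hright, Matrix.one_mul]
    have h3 : M * -(Jmat ℂ n) * Mᵀ = -(Jmat ℂ n) := by
      calc M * -(Jmat ℂ n) * Mᵀ
          = M * (-(Jmat ℂ n) * Mᵀ * Jmat ℂ n) * -(Jmat ℂ n) := by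
            simp only [Matrix.mul_assoc, Matrix.mul_neg, Matrix.neg_mul, hJJ, neg_neg,
              Matrix.mul_one, Matrix.one_mul]
        _ = -(Jmat ℂ n) := h2
    have h4 : -(M * Jmat ℂ n * Mᵀ) = -(Jmat ℂ n) := by
      rw [← h3, Matrix.mul_neg, Matrix.neg_mul]
    exact neg_injective h4
  have hcomp1 : Mᵀ * Jmat ℂ n * M =
      Matrix.fromBlocks (Aᵀ*C - Cᵀ*A) (Aᵀ*D - Cᵀ*B) (Bᵀ*C - Dᵀ*A) (Bᵀ*D - Dᵀ*B) := by
    rw [hM, hJb, Matrix.fromBlocks_transpose]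
    simp only [Matrix.fromBlocks_multiply]
    rw [Matrix.fromBlocks_inj]
    refine ⟨by noncomm_ring, by noncomm_ring, by noncomm_ring, by noncomm_ring⟩
  have hcomp2 : M * Jmat ℂ n * Mᵀ =
      Matrix.fromBlocks (A*Bᵀ - B*Aᵀ) (A*Dᵀ - B*Cᵀ) (C*Bᵀ - D*Aᵀ) (C*Dᵀ - D*Cᵀ) := by
    rw [hM, hJb, Matrix.fromBlocks_transpose]
    simp only [Matrix.fromBlocks_multiply]
    rw [Matrix.fromBlocks_inj]
    refine ⟨by noncomm_ring, by noncomm_ring, by noncomm_ring, by noncomm_ring⟩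
  have hs1 := hcomp1 ▸ hsymp'
  rw [hJb, Matrix.fromBlocks_inj] at hs1
  obtain ⟨s11, s12, _, _⟩ := hs1
  have ht1 := hcomp2 ▸ hMJ
  rw [hJb, Matrix.fromBlocks_inj] at ht1
  obtain ⟨t11, _, _, _⟩ := ht1
  have hACs : Aᵀ*C = Cᵀ*A := sub_eq_zero.mp s11
  have hABt : A*Bᵀ = B*Aᵀ := sub_eq_zero.mp t11
  have hAD : Aᵀ*D = 1 + Cᵀ*B := by
    have : Aᵀ*D - Cᵀ*B = 1 := s12
    rw [← this]; abel
  have hsym1 : (Aᵀ*C)ᵀ = Aᵀ*C := by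
    rw [Matrix.transpose_mul, Matrix.transpose_transpose, ← hACs]
  have hsym2 : (Ainv*B)ᵀ = Ainv*B := by
    calc (Ainv*B)ᵀ = Bᵀ * Ainvᵀ := by rw [Matrix.transpose_mul]
      _ = (Ainv * A) * (Bᵀ * Ainvᵀ) := by rw [hAi2, Matrix.one_mul]
      _ = Ainv * (A * Bᵀ) * Ainvᵀ := by simp only [Matrix.mul_assoc]
      _ = Ainv * (B * Aᵀ) * Ainvᵀ := by rw [hABt]
      _ = Ainv * B * (Aᵀ * Ainvᵀ) := by simp only [Matrix.mul_assoc]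
      _ = Ainv * B * (Ainv * A)ᵀ := by rw [Matrix.transpose_mul]
      _ = Ainv * B := by rw [hAi2, Matrix.transpose_one, Matrix.mul_one]
  refine ⟨LD ++ [Matrix.fromBlocks 1 0 (Aᵀ*C) 1, Matrix.fromBlocks 1 (Ainv*B) 0 1],
    ?_, ?_, ?_⟩
  · rw [List.length_append, hLDlen, hlen, List.length_finRange]
    simp only [List.length_cons, List.length_nil]
    omega
  · intro E hE
    rcases List.mem_append.mp hE with h | h
    · exact hLDelem E h
    · simp only [List.mem_cons, List.not_mem_nil, or_false] at h
      rcases h with h | h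
      · exact ⟨Aᵀ*C, hsym1, Or.inr h⟩
      · exact ⟨Ainv*B, hsym2, Or.inl h⟩
  · rw [List.prod_append, List.prod_cons, List.prod_cons, List.prod_nil, Matrix.mul_one,
      ← hLDprod]
    have hinner : Matrix.fromBlocks (1 : Matrix (Fin n) (Fin n) ℂ) 0 (Aᵀ*C) 1 *
        Matrix.fromBlocks 1 (Ainv*B) 0 1 =
        Matrix.fromBlocks 1 (Ainv*B) (Aᵀ*C) (Aᵀ*C*(Ainv*B) + 1) := by
      simp only [Matrix.fromBlocks_multiply]
      rw [Matrix.fromBlocks_inj]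
      refine ⟨by noncomm_ring, by noncomm_ring, by noncomm_ring, by noncomm_ring⟩
    rw [hinner]
    have hTR : A * (Ainv * B) = B := by
      rw [← Matrix.mul_assoc, hAi1, Matrix.one_mul]
    have hBL : E' * (Aᵀ * C) = C := by
      rw [← Matrix.mul_assoc, hE1, Matrix.one_mul]
    have hmid : Aᵀ*C*(Ainv*B) + 1 = Aᵀ * D := by
      rw [hACs]
      calc Cᵀ*A*(Ainv*B) + 1 = Cᵀ*(A*Ainv)*B + 1 := by simp only [Matrix.mul_assoc]
        _ = Cᵀ*B + 1 := by rw [hAi1, Matrix.mul_one]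
        _ = Aᵀ * D := by rw [hAD]; abel
    have hBR : E' * (Aᵀ*C*(Ainv*B) + 1) = D := by
      rw [hmid, ← Matrix.mul_assoc, hE1, Matrix.one_mul]
    rw [hM]
    simp only [Matrix.fromBlocks_multiply]
    rw [Matrix.fromBlocks_inj]
    refine ⟨?_, ?_, ?_, ?_⟩ <;>
      simp only [Matrix.zero_mul, Matrix.mul_zero, Matrix.mul_one, Matrix.one_mul,
        add_zero, zero_add]
    · exact hTR.symm
    · exact hBL.symm
    · exact hBR.symm
end

section
/- If M ∈ Sp_{2n}(ℂ) is such that M M* = [[I, B],[C, I]] in block form with C having zeros on and above the diagonal, then M M* = I, i.e., M is unitary. -/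
open Matrix

/-- If `M` is symplectic and `M M* = [[I,B],[C,I]]` with `C` vanishing on and above the
diagonal, then `M M* = I`, i.e. `M` is unitary. -/
theorem stmt13 {n : ℕ} (M : Matrix (Idx n) (Idx n) ℂ) (hM : IsSymplectic M)
    (B C : Matrix (Fin n) (Fin n) ℂ)
    (hMM : M * Mᴴ = Matrix.fromBlocks 1 B C 1)
    (hC : ∀ i j : Fin n, i ≤ j → C i j = 0) :
    M * Mᴴ = 1 := by
  classical
  -- J with the mathlib convention
  have hJmat : Jmat ℂ n = -(Matrix.J (Fin n) ℂ) := by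
    simp [Jmat, Matrix.J, Matrix.fromBlocks_neg]
  -- M is in the mathlib symplectic group
  have hM' : M ∈ Matrix.symplecticGroup (Fin n) ℂ := by
    rw [SymplecticGroup.mem_iff']
    have := hM
    rw [IsSymplectic, hJmat] at this
    have h2 : Mᵀ * -Matrix.J (Fin n) ℂ * M = -(Mᵀ * Matrix.J (Fin n) ℂ * M) := by
      simp [Matrix.mul_neg, Matrix.neg_mul]
    rw [h2] at this
    exact neg_injective this
  -- J is fixed by conjugation
  have hJconj : (Matrix.J (Fin n) ℂ).map (starRingEnd ℂ) = Matrix.J (Fin n) ℂ := by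
    ext i j
    rcases i with i | i <;> rcases j with j | j <;>
      simp [Matrix.J, Matrix.fromBlocks, Matrix.one_apply]
  -- Mᴴ is in the symplectic group
  have hMH : Mᴴ ∈ Matrix.symplecticGroup (Fin n) ℂ := by
    rw [SymplecticGroup.mem_iff'] at hM' ⊢
    have hc := congrArg (fun X => X.map (starRingEnd ℂ)) hM'
    simp only [Matrix.map_mul, hJconj] at hc
    have e1 : (Mᴴ)ᵀ = M.map (starRingEnd ℂ) := by
      ext i j; simp [Matrix.conjTranspose_apply]
    have e2 : (Mᴴ : Matrix (Idx n) (Idx n) ℂ) = Mᵀ.map (starRingEnd ℂ) := by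
      ext i j; simp [Matrix.conjTranspose_apply]
    rw [e1, e2]
    have e3 : (Mᵀ).map (starRingEnd ℂ) * (Matrix.J (Fin n) ℂ).map (starRingEnd ℂ)
        * M.map (starRingEnd ℂ) = (Matrix.J (Fin n) ℂ).map (starRingEnd ℂ) := by
      simp only [← Matrix.map_mul]; exact congrArg (fun X => X.map (starRingEnd ℂ)) hM'
    rw [hJconj] at e3
    -- e3 : Mᵀ.map conj * J * M.map conj = J, but we need M.map conj * J * Mᵀ.map conj = J
    -- use mem_iff ↔ mem_iff'
    have : Mᵀ.map (starRingEnd ℂ) ∈ Matrix.symplecticGroup (Fin n) ℂ := by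
      rw [SymplecticGroup.mem_iff]
      have e4 : (Mᵀ.map (starRingEnd ℂ))ᵀ = M.map (starRingEnd ℂ) := by
        ext i j; simp
      rw [e4]
      exact hc
    rw [SymplecticGroup.mem_iff'] at this
    have e5 : (Mᵀ.map (starRingEnd ℂ))ᵀ = M.map (starRingEnd ℂ) := by
      ext i j; simp
    rw [e5] at this
    exact this
  -- hence M * Mᴴ is symplectic
  have hP : M * Mᴴ ∈ Matrix.symplecticGroup (Fin n) ℂ := mul_mem hM' hMH
  rw [SymplecticGroup.mem_iff', hMM] at hP
  rw [Matrix.fromBlocks_transpose, Matrix.J, Matrix.fromBlocks_multiply,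
    Matrix.fromBlocks_multiply] at hP
  have h11 := congrArg Matrix.toBlocks₁₁ hP
  simp only [Matrix.toBlocks_fromBlocks₁₁] at h11
  -- h11 : top-left block equation, yields Cᵀ = C
  have hCsymm : ∀ i j : Fin n, C i j = C j i := by
    intro i j
    have := congrFun (congrFun h11 j) i
    simp [Matrix.transpose_apply] at this
    linear_combination this
  have hC0 : C = 0 := by
    ext i j
    rcases le_total i j with h | h
    · simpa using hC i j h
    · rw [hCsymm i j]; simpa using hC j i h
  -- Hermitian: (M Mᴴ)ᴴ = M Mᴴ gives B = Cᴴ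
  have hHerm : (M * Mᴴ)ᴴ = M * Mᴴ := by
    rw [Matrix.conjTranspose_mul, Matrix.conjTranspose_conjTranspose]
  rw [hMM, Matrix.fromBlocks_conjTranspose] at hHerm
  have h12 := congrArg Matrix.toBlocks₁₂ hHerm
  simp only [Matrix.toBlocks_fromBlocks₁₂] at h12
  -- h12 : Cᴴ = B
  have hB0 : B = 0 := by
    rw [← h12, hC0]; simp
  rw [hMM, hB0, hC0, ← Matrix.fromBlocks_one]
end

section
/- If X is a compact (or more generally finite dimensional normal) topological space and M: X → Sp(n) is null-homotopic, then for every ε > 0 there exist finitely many continuous maps N₁,...,N_k: X → Sp(n) with M(x) = N₁(x)···N_k(x) and ‖I - N_j(x)‖ < ε for all x ∈ X and all j. -/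
open Matrix

lemma isSymplectic_mul' {n : ℕ} {A B : Matrix (Idx n) (Idx n) ℂ}
    (hA : IsSymplectic A) (hB : IsSymplectic B) : IsSymplectic (A * B) := by
  unfold IsSymplectic at *
  have h : (A * B)ᵀ * Jmat ℂ n * (A * B) = Bᵀ * (Aᵀ * Jmat ℂ n * A) * B := by
    rw [transpose_mul]; simp only [mul_assoc]
  rw [h, hA, hB]

lemma isSymplectic_conjTranspose' {n : ℕ} {A : Matrix (Idx n) (Idx n) ℂ}
    (hA : IsSymplectic A) (hU : A ∈ Matrix.unitaryGroup (Idx n) ℂ) :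
    IsSymplectic Aᴴ := by
  have h1 : A * Aᴴ = 1 := by
    simpa [Matrix.star_eq_conjTranspose] using Matrix.mem_unitaryGroup_iff.mp hU
  have h2 : (Aᴴ)ᵀ * Aᵀ = 1 := by
    rw [← transpose_mul, h1, transpose_one]
  unfold IsSymplectic at *
  calc (Aᴴ)ᵀ * Jmat ℂ n * Aᴴ
      = (Aᴴ)ᵀ * (Aᵀ * Jmat ℂ n * A) * Aᴴ := by rw [hA]
    _ = ((Aᴴ)ᵀ * Aᵀ) * (Jmat ℂ n * (A * Aᴴ)) := by simp only [mul_assoc]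
    _ = Jmat ℂ n := by rw [h2, h1, one_mul, mul_one]

/-- If `X` is compact and `M : X → Sp(n)` is null-homotopic, then for every `ε > 0`
one can write `M` as a finite product of continuous maps into `Sp(n)` all of whose
values are `ε`-close to the identity. -/
theorem stmt15 {X : Type*} [TopologicalSpace X] [CompactSpace X] {n : ℕ}
    (M : X → Matrix (Idx n) (Idx n) ℂ) (hMc : Continuous M)
    (hMsp : ∀ x, IsSymplectic (M x) ∧ M x ∈ Matrix.unitaryGroup (Idx n) ℂ)
    (hhom : ∃ H : ℝ → X → Matrix (Idx n) (Idx n) ℂ,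
      Continuous (fun p : ℝ × X => H p.1 p.2) ∧
      (∀ t ∈ Set.Icc (0 : ℝ) 1, ∀ x,
        IsSymplectic (H t x) ∧ H t x ∈ Matrix.unitaryGroup (Idx n) ℂ) ∧
      (∀ x, H 0 x = 1) ∧ H 1 = M) :
    ∀ ε : ℝ, 0 < ε →
      ∃ (k : ℕ) (N : Fin k → X → Matrix (Idx n) (Idx n) ℂ),
        (∀ j, Continuous (N j)) ∧
        (∀ j x, IsSymplectic (N j x) ∧ N j x ∈ Matrix.unitaryGroup (Idx n) ℂ) ∧
        (∀ x, M x = (List.ofFn fun j => N j x).prod) ∧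
        ∀ (j : Fin k) (x : X) (a b : Idx n),
          ‖(1 : Matrix (Idx n) (Idx n) ℂ) a b - N j x a b‖ < ε := by
  obtain ⟨H, hHc, hHsp, hH0, hH1⟩ := hhom
  intro ε hε
  have hHt : ∀ t : ℝ, Continuous fun x => H t x :=
    fun t => hHc.comp (Continuous.prodMk_right t)
  set g : ℝ × ℝ × X → ℝ :=
    fun p => ∑ a : Idx n, ∑ b : Idx n,
      ‖((1 : Matrix (Idx n) (Idx n) ℂ) - H p.1 p.2.2 * (H p.2.1 p.2.2)ᴴ) a b‖ with hgdef
  have hgc : Continuous g := by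
    refine continuous_finset_sum _ fun a _ => continuous_finset_sum _ fun b _ => ?_
    refine Continuous.norm ?_
    refine Continuous.matrix_elem ?_ a b
    exact continuous_const.sub
      ((hHc.comp (continuous_fst.prodMk (continuous_snd.comp continuous_snd))).matrix_mul
        ((hHc.comp ((continuous_fst.comp continuous_snd).prodMk
          (continuous_snd.comp continuous_snd))).matrix_conjTranspose))
  have hdiag : ∀ t ∈ Set.Icc (0:ℝ) 1, ∀ x : X, g (t, t, x) = 0 := by
    intro t ht x
    have h1 : H t x * (H t x)ᴴ = 1 := by
      simpa [Matrix.star_eq_conjTranspose] using Matrix.mem_unitaryGroup_iff.mp ((hHsp t ht x).2)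
    simp [hgdef, h1]
  have hentry : ∀ (t s : ℝ) (x : X) (a b : Idx n),
      ‖((1 : Matrix (Idx n) (Idx n) ℂ) - H t x * (H s x)ᴴ) a b‖ ≤ g (t, s, x) := by
    intro t s x a b
    calc ‖((1 : Matrix (Idx n) (Idx n) ℂ) - H t x * (H s x)ᴴ) a b‖
        ≤ ∑ b' : Idx n, ‖((1 : Matrix (Idx n) (Idx n) ℂ) - H t x * (H s x)ᴴ) a b'‖ :=
          Finset.single_le_sum (fun _ _ => norm_nonneg _) (Finset.mem_univ b)
      _ ≤ g (t, s, x) :=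
          Finset.single_le_sum
            (f := fun a' => ∑ b' : Idx n,
              ‖((1 : Matrix (Idx n) (Idx n) ℂ) - H t x * (H s x)ᴴ) a' b'‖)
            (fun _ _ => Finset.sum_nonneg fun _ _ => norm_nonneg _) (Finset.mem_univ a)
  obtain ⟨δ, hδpos, hδ⟩ : ∃ δ > 0, ∀ t ∈ Set.Icc (0:ℝ) 1, ∀ s ∈ Set.Icc (0:ℝ) 1,
      ∀ x : X, |t - s| < δ → g (t, s, x) < ε := by
    set K : Set (ℝ × ℝ × X) := Set.Icc 0 1 ×ˢ Set.Icc 0 1 ×ˢ Set.univ with hKdef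
    have hKc : IsCompact K := isCompact_Icc.prod (isCompact_Icc.prod isCompact_univ)
    set A : Set (ℝ × ℝ × X) := K ∩ g ⁻¹' Set.Ici ε with hAdef
    have hAc : IsCompact A := hKc.inter_right (isClosed_Ici.preimage hgc)
    rcases A.eq_empty_or_nonempty with hAe | hAne
    · refine ⟨1, one_pos, fun t ht s hs x _ => ?_⟩
      by_contra hge
      have hmem : (t, s, x) ∈ A := ⟨⟨ht, hs, Set.mem_univ x⟩, le_of_not_gt hge⟩
      rw [hAe] at hmem
      exact hmem
    · obtain ⟨p₀, hp₀A, hmin⟩ := hAc.exists_isMinOn hAne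
        ((continuous_fst.sub (continuous_fst.comp continuous_snd)).abs.continuousOn)
      obtain ⟨t₀, s₀, x₀⟩ := p₀
      have hεg : ε ≤ g (t₀, s₀, x₀) := hp₀A.2
      have ht₀ : t₀ ∈ Set.Icc (0:ℝ) 1 := hp₀A.1.1
      refine ⟨|t₀ - s₀|, ?_, ?_⟩
      · rcases (abs_nonneg (t₀ - s₀)).lt_or_eq with h | h
        · exact h
        · exfalso
          have heq : t₀ = s₀ := sub_eq_zero.mp (abs_eq_zero.mp h.symm)
          have h0 : g (t₀, s₀, x₀) = 0 := by rw [← heq]; exact hdiag t₀ ht₀ x₀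
          rw [h0] at hεg; linarith
      · intro t ht s hs x hlt
        by_contra hge
        have hmem : (t, s, x) ∈ A := ⟨⟨ht, hs, Set.mem_univ x⟩, le_of_not_gt hge⟩
        have := hmin hmem
        simp only at this
        exact absurd hlt (not_lt.mpr this)
  obtain ⟨k', hk'⟩ := exists_nat_one_div_lt hδpos
  set k : ℕ := k' + 1 with hkdef
  have hkpos : (0:ℝ) < (k : ℝ) := by positivity
  have hk0 : (k : ℝ) ≠ 0 := ne_of_gt hkpos
  set τ : ℕ → ℝ := fun i => ((k:ℝ) - i) / k with hτdef
  have hτmem : ∀ i : ℕ, i ≤ k → τ i ∈ Set.Icc (0:ℝ) 1 := by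
    intro i hi
    have h1 : (i:ℝ) ≤ (k:ℝ) := by exact_mod_cast hi
    have h2 : (0:ℝ) ≤ (i:ℝ) := Nat.cast_nonneg i
    constructor
    · apply div_nonneg <;> linarith
    · rw [div_le_one hkpos]; linarith
  have hτdiff : ∀ i : ℕ, |τ i - τ (i+1)| = 1 / k := by
    intro i
    have h : τ i - τ (i+1) = 1 / k := by
      simp only [hτdef]
      rw [div_sub_div_same]
      push_cast
      ring_nf
    rw [h, abs_of_pos (by positivity)]
  have hτ0 : τ 0 = 1 := by simp only [hτdef]; simp [div_self hk0]
  have hτk : τ k = 0 := by simp [hτdef]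
  have hsmall : (1:ℝ) / k < δ := by
    have : ((k:ℝ)) = (k':ℝ) + 1 := by push_cast [hkdef]; ring
    rw [this]; exact hk'
  refine ⟨k, fun j x => H (τ j) x * (H (τ ((j:ℕ)+1)) x)ᴴ, ?_, ?_, ?_, ?_⟩
  · intro j
    exact (hHt (τ j)).matrix_mul ((hHt (τ ((j:ℕ)+1))).matrix_conjTranspose)
  · intro j x
    have hj1 : (j:ℕ) ≤ k := j.isLt.le
    have hj2 : (j:ℕ) + 1 ≤ k := j.isLt
    have h1 := hHsp (τ j) (hτmem _ hj1) x
    have h2 := hHsp (τ ((j:ℕ)+1)) (hτmem _ hj2) x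
    refine ⟨isSymplectic_mul' h1.1 (isSymplectic_conjTranspose' h2.1 h2.2), ?_⟩
    exact mul_mem h1.2 (Unitary.star_mem h2.2)
  · intro x
    have key : ∀ m : ℕ, m ≤ k →
        (List.ofFn fun j : Fin m => H (τ j) x * (H (τ ((j:ℕ)+1)) x)ᴴ).prod
          = H (τ 0) x * (H (τ m) x)ᴴ := by
      intro m
      induction m with
      | zero =>
        intro _
        have h1 : H (τ 0) x * (H (τ 0) x)ᴴ = 1 := by
          simpa [Matrix.star_eq_conjTranspose] using Matrix.mem_unitaryGroup_iff.mp
            ((hHsp (τ 0) (hτmem 0 (Nat.zero_le _)) x).2)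
        simp [h1.symm]
      | succ m ih =>
        intro hm
        have hm' : m ≤ k := Nat.le_of_succ_le hm
        rw [List.ofFn_succ', List.prod_concat]
        simp only [Fin.coe_castSucc, Fin.val_last]
        rw [ih hm']
        have h1 : (H (τ m) x)ᴴ * H (τ m) x = 1 := by
          simpa [Matrix.star_eq_conjTranspose] using Matrix.mem_unitaryGroup_iff'.mp
            ((hHsp (τ m) (hτmem m hm') x).2)
        rw [mul_assoc, ← mul_assoc ((H (τ m) x)ᴴ), h1, one_mul]
    rw [key k le_rfl, hτ0, hτk, hH1, hH0, conjTranspose_one, mul_one]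
  · intro j x a b
    have hj1 : (j:ℕ) ≤ k := j.isLt.le
    have hj2 : (j:ℕ) + 1 ≤ k := j.isLt
    have h1 : |τ j - τ ((j:ℕ)+1)| < δ := by rw [hτdiff]; exact hsmall
    have h2 := hδ (τ j) (hτmem _ hj1) (τ ((j:ℕ)+1)) (hτmem _ hj2) x h1
    have h3 := hentry (τ j) (τ ((j:ℕ)+1)) x a b
    calc ‖(1 : Matrix (Idx n) (Idx n) ℂ) a b - (H (τ j) x * (H (τ ((j:ℕ)+1)) x)ᴴ) a b‖
        = ‖((1 : Matrix (Idx n) (Idx n) ℂ) - H (τ j) x * (H (τ ((j:ℕ)+1)) x)ᴴ) a b‖ := by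
          rw [Matrix.sub_apply]
      _ ≤ g (τ j, τ ((j:ℕ)+1), x) := h3
      _ < ε := h2
end

section
/- If R has Bass stable rank 1 and M ∈ Sp_{2n}(R), then M can be multiplied on the left by finitely many elementary symplectic matrices and matrices of the form K_{ij}(a) so that the resulting matrix has invertible entry in position (1,1). -/
open Matrix

lemma kprod_eq {R : Type*} [CommRing R] {n : ℕ} [NeZero n] (c : Fin n → R) :
    ∀ (l : List (Fin n)), l.Nodup → (0 : Fin n) ∉ l →
    (l.map (fun j => Kmat 0 j (c j))).prod =
      fromBlocks (1 + Matrix.of (fun i k => if i = 0 ∧ k ∈ l then c k else 0)) 0 0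
        (1 - Matrix.of (fun i k => if k = 0 ∧ i ∈ l then c i else 0)) := by
  intro l
  induction l with
  | nil =>
    intro _ _
    have h1 : (Matrix.of (fun (i k : Fin n) => if i = 0 ∧ k ∈ ([] : List (Fin n)) then c k else 0)) = 0 := by
      ext i k; simp
    have h2 : (Matrix.of (fun (i k : Fin n) => if k = 0 ∧ i ∈ ([] : List (Fin n)) then c i else 0)) = 0 := by
      ext i k; simp
    rw [h1, h2]
    simp [← fromBlocks_one]
  | cons j l ih =>
    intro hnd h0
    have hj0 : j ≠ 0 := fun h => h0 (h ▸ List.mem_cons_self)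
    have hjl : j ∉ l := (List.nodup_cons.mp hnd).1
    have h0l : (0 : Fin n) ∉ l := fun h => h0 (List.mem_cons_of_mem _ h)
    rw [List.map_cons, List.prod_cons, ih (List.nodup_cons.mp hnd).2 h0l, Kmat,
      fromBlocks_multiply]
    have hTL : (1 + Matrix.single 0 j (c j)) *
        (1 + Matrix.of (fun i k => if i = 0 ∧ k ∈ l then c k else 0)) + (0 : Matrix (Fin n) (Fin n) R) * 0 =
        1 + Matrix.of (fun i k => if i = 0 ∧ k ∈ (j :: l) then c k else 0) := by
      ext i k
      simp only [Matrix.add_mul, Matrix.mul_add, Matrix.one_mul, Matrix.mul_one,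
        Matrix.zero_mul, Matrix.add_apply, Matrix.of_apply, Matrix.zero_apply,
        add_zero, List.mem_cons]
      have hEN : (Matrix.single 0 j (c j) *
          Matrix.of (fun i k => if i = 0 ∧ k ∈ l then c k else 0) : Matrix (Fin n) (Fin n) R) i k = 0 := by
        by_cases hi : i = 0
        · subst hi
          rw [Matrix.single_mul_apply_same]
          simp [hj0]
        · rw [Matrix.single_mul_apply_of_ne _ _ _ _ _ hi]
      rw [hEN, add_zero]
      by_cases hi : i = 0
      · subst hi
        by_cases hk : k = j
        · subst hk
          simp [hjl, Matrix.single_apply_same]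
        · simp [Matrix.single, Ne.symm hk, hk]
      · simp [Matrix.single, hi, Ne.symm hi]
    have hBR : (0 : Matrix (Fin n) (Fin n) R) * 0 + (1 - Matrix.single j 0 (c j)) *
        (1 - Matrix.of (fun i k => if k = 0 ∧ i ∈ l then c i else 0)) =
        1 - Matrix.of (fun i k => if k = 0 ∧ i ∈ (j :: l) then c i else 0) := by
      ext i k
      simp only [Matrix.sub_mul, Matrix.mul_sub, Matrix.one_mul, Matrix.mul_one,
        Matrix.zero_mul, Matrix.sub_apply, Matrix.add_apply, Matrix.of_apply,
        Matrix.zero_apply, zero_add, List.mem_cons]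
      have hEN : (Matrix.single j 0 (c j) *
          Matrix.of (fun i k => if k = 0 ∧ i ∈ l then c i else 0) : Matrix (Fin n) (Fin n) R) i k = 0 := by
        by_cases hi : i = j
        · subst hi
          rw [Matrix.single_mul_apply_same]
          simp [h0l]
        · rw [Matrix.single_mul_apply_of_ne _ _ _ _ _ hi]
      rw [hEN, sub_zero]
      by_cases hk : k = 0
      · subst hk
        by_cases hi : i = j
        · subst hi
          simp [hjl, Matrix.single_apply_same]
        · simp [Matrix.single, Ne.symm hi, hi]
      · simp [Matrix.single, hk, Ne.symm hk]
    rw [hTL, hBR]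
    simp

/-- Over a ring of Bass stable rank one, every symplectic matrix can be multiplied on the
left by finitely many elementary symplectic matrices and matrices `K_{ij}(a)` so that the
entry in position `(1,1)` becomes invertible. -/
theorem stmt18 {R : Type*} [CommRing R] {n : ℕ} [NeZero n]
    (hbsr : ∀ x₁ x₂ : R, (∃ r s : R, r * x₁ + s * x₂ = 1) → ∃ y : R, IsUnit (x₁ + y * x₂))
    (M : Matrix (Idx n) (Idx n) R) (hM : IsSymplectic M) :
    ∃ L : List (Matrix (Idx n) (Idx n) R),
      (∀ E ∈ L, IsElemSymp E ∨ ∃ (i j : Fin n) (a : R), i ≠ j ∧ E = Kmat i j a) ∧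
      IsUnit ((L.prod * M) (Sum.inl 0) (Sum.inl 0)) := by
  -- J * J = -1
  have hJJ : Jmat R n * Jmat R n = -1 := by
    have : (-1 : Matrix (Idx n) (Idx n) R) = fromBlocks (-1) 0 0 (-1) := by
      rw [← fromBlocks_one, fromBlocks_neg, neg_zero]
    rw [Jmat, fromBlocks_multiply, this]
    congr 1 <;> simp
  -- left inverse of M
  set W : Matrix (Idx n) (Idx n) R := (-(Jmat R n)) * Mᵀ * Jmat R n with hWdef
  have hWM : W * M = 1 := by
    have h1 : W * M = (-(Jmat R n)) * (Mᵀ * Jmat R n * M) := by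
      rw [hWdef]; noncomm_ring
    rw [h1, hM, Matrix.neg_mul, hJJ]
    simp
  set w : Idx n → R := W (Sum.inl 0) with hwdef
  set v : Idx n → R := fun k => M k (Sum.inl 0) with hvdef
  have hw : ∑ k, w k * v k = 1 := by
    have := congrArg (fun X : Matrix (Idx n) (Idx n) R => X (Sum.inl 0) (Sum.inl 0)) hWM
    simpa [Matrix.mul_apply] using this
  -- stable rank 1
  obtain ⟨y, hy⟩ := hbsr (v (Sum.inl 0)) (1 - w (Sum.inl 0) * v (Sum.inl 0))
    ⟨w (Sum.inl 0), 1, by ring⟩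
  set g : Idx n → R := fun k => y * w k + (if k = Sum.inl 0 then 1 - y * w (Sum.inl 0) else 0)
    with hgdef
  have hu : IsUnit (∑ k, g k * v k) := by
    have hsum : ∑ k, g k * v k =
        v (Sum.inl 0) + y * (1 - w (Sum.inl 0) * v (Sum.inl 0)) := by
      simp only [hgdef, add_mul, ite_mul, zero_mul, Finset.sum_add_distrib,
        Finset.sum_ite_eq', Finset.mem_univ, if_true]
      have : ∑ k, y * w k * v k = y * ∑ k, w k * v k := by
        rw [Finset.mul_sum]; exact Finset.sum_congr rfl fun k _ => by ring
      rw [this, hw]; ring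
    rw [hsum]; exact hy
  -- coefficients
  set c : Fin n → R := fun j => y * w (Sum.inl j) with hcdef
  set e : Fin n → R := fun k => y * w (Sum.inr k) with hedef
  set T : R := ∑ m, (if m = 0 then 0 else c m * e m) with hTdef
  set d : Fin n → R := fun k => if k = 0 then e 0 - T else e k with hddef
  set S : Matrix (Fin n) (Fin n) R := Matrix.of fun k l =>
    (if k = 0 then d l else 0) + (if l = 0 then d k else 0) -
      (if k = 0 ∧ l = 0 then d 0 else 0) with hSdef
  have hS : Sᵀ = S := by
    ext k l
    simp only [hSdef, transpose_apply, Matrix.of_apply]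
    by_cases hk : k = 0 <;> by_cases hl : l = 0 <;> simp [hk, hl]
  set lfil : List (Fin n) := (List.finRange n).filter (fun j => decide (j ≠ 0)) with hlfil
  have hmem : ∀ k : Fin n, k ∈ lfil ↔ k ≠ 0 := by
    intro k; simp [hlfil, List.mem_filter]
  set N : Matrix (Fin n) (Fin n) R :=
    Matrix.of (fun i k => if i = 0 ∧ k ≠ 0 then c k else 0) with hNdef
  set B : Matrix (Fin n) (Fin n) R :=
    1 - Matrix.of (fun i k => if k = 0 ∧ i ≠ 0 then c i else 0) with hBdef
  refine ⟨lfil.map (fun j => Kmat 0 j (c j)) ++ [fromBlocks 1 S 0 1], ?_, ?_⟩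
  · intro E hE
    rcases List.mem_append.mp hE with hE | hE
    · obtain ⟨j, hj, rfl⟩ := List.mem_map.mp hE
      exact Or.inr ⟨0, j, c j, Ne.symm ((hmem j).mp hj), rfl⟩
    · rw [List.mem_singleton.mp hE]
      exact Or.inl ⟨S, hS, Or.inl rfl⟩
  · have hKP : (lfil.map (fun j => Kmat 0 j (c j))).prod = fromBlocks (1 + N) 0 0 B := by
      rw [kprod_eq c lfil ((List.nodup_finRange n).filter _)
        (fun h => by simpa using (hmem 0).mp h)]
      congr 1 <;> ext i k <;> simp [hNdef, hBdef, hmem]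
    have hprod : (lfil.map (fun j => Kmat 0 j (c j)) ++ [fromBlocks 1 S 0 1]).prod =
        fromBlocks (1 + N) ((1 + N) * S) 0 B := by
      rw [List.prod_append, List.prod_singleton, hKP, fromBlocks_multiply]
      congr 1 <;> simp
    rw [hprod]
    have hentry : (((fromBlocks (1 + N) ((1 + N) * S) 0 B : Matrix (Idx n) (Idx n) R)) * M) (Sum.inl 0) (Sum.inl 0) =
        ∑ k, g k * v k := by
      rw [Matrix.mul_apply, Fintype.sum_sum_type, Fintype.sum_sum_type]
      congr 1
      · apply Finset.sum_congr rfl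
        intro j _
        have h1 : (fromBlocks (1 + N) ((1 + N) * S) 0 B) (Sum.inl 0) (Sum.inl j) =
            (1 + N) 0 j := rfl
        rw [h1]
        congr 1
        by_cases hj : j = 0
        · subst hj
          simp [hNdef, hgdef, Matrix.add_apply, Matrix.one_apply]
        · simp [hNdef, hgdef, hcdef, hj, Matrix.add_apply, Matrix.one_apply, Ne.symm hj]
      · apply Finset.sum_congr rfl
        intro k _
        have h1 : (fromBlocks (1 + N) ((1 + N) * S) 0 B) (Sum.inl 0) (Sum.inr k) =
            ((1 + N) * S) 0 k := rfl
        rw [h1]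
        congr 1
        have hS0 : S 0 k = d k := by
          simp [hSdef]
        have hNS : (N * S) 0 k = if k = 0 then T else 0 := by
          rw [Matrix.mul_apply]
          by_cases hk : k = 0
          · subst hk
            rw [if_pos rfl, hTdef]
            apply Finset.sum_congr rfl
            intro m _
            by_cases hm : m = 0
            · subst hm; simp [hNdef]
            · simp [hNdef, hSdef, hddef, hm]
          · rw [if_neg hk]
            apply Finset.sum_eq_zero
            intro m _
            by_cases hm : m = 0
            · subst hm; simp [hNdef]
            · simp [hNdef, hSdef, hm, hk]
        rw [Matrix.add_mul, Matrix.one_mul, Matrix.add_apply, hS0, hNS]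
        by_cases hk : k = 0
        · subst hk
          simp [hddef, hgdef, hedef]
        · simp [hddef, hgdef, hedef, hk]
    rw [hentry]
    exact hu
end
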